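/- arXiv:1503.02299 — 3 statements merged into one kernel-verified Lean document; each statement's English description precedes it below -/
import Mathlib

section
/- For every $L^2_k$-atom $a$ supported in a closed ball $B = B(0,R)$ centered at the origin, the Hardy-type averaging operator satisfies $\|\mathcal{H}_k a\|_{L^1(\nu_k)} \leq 2$. -/
open MeasureTheory Metric Filter Topology Set
open scoped ENNReal NNReal

noncomputable section

/-- The Dunkl weight function. -/
def dunklWeight {d : ℕ} (Rp : Finset (EuclideanSpace ℝ (Fin d)))
    (k : EuclideanSpace ℝ (Fin d) → ℝ) (x : EuclideanSpace ℝ (Fin d)) : ℝ :=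
  ∏ ξ ∈ Rp, |(inner ℝ ξ x : ℝ)| ^ (2 * k ξ)

/-- The weighted measure `ν_k`. -/
def dunklMeasure {d : ℕ} (Rp : Finset (EuclideanSpace ℝ (Fin d)))
    (k : EuclideanSpace ℝ (Fin d) → ℝ) : Measure (EuclideanSpace ℝ (Fin d)) :=
  volume.withDensity fun x => ENNReal.ofReal (dunklWeight Rp k x)

/-- An `L²_k`-atom supported in the closed ball of center `x₀` and radius `r`. -/
def IsL2Atom {d : ℕ} (ν : Measure (EuclideanSpace ℝ (Fin d)))
    (a : EuclideanSpace ℝ (Fin d) → ℝ) (x₀ : EuclideanSpace ℝ (Fin d)) (r : ℝ) : Prop :=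
  MemLp a 2 ν ∧ Function.support a ⊆ closedBall x₀ r ∧
    (∫ x, |a x| ^ 2 ∂ν) ^ ((1 : ℝ)/2) ≤ (ν (closedBall x₀ r)).toReal ^ (-(1 : ℝ)/2) ∧
    ∫ x in closedBall x₀ r, a x ∂ν = 0

/-- The Hardy-type averaging operator `H_k`. -/
def hardyOp {d : ℕ} (ν : Measure (EuclideanSpace ℝ (Fin d)))
    (f : EuclideanSpace ℝ (Fin d) → ℝ) (x : EuclideanSpace ℝ (Fin d)) : ℝ :=
  (ν (closedBall 0 ‖x‖)).toReal⁻¹ * ∫ y in closedBall (0 : EuclideanSpace ℝ (Fin d)) ‖x‖, f y ∂ν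

section Aux

variable {d : ℕ} (Rp : Finset (EuclideanSpace ℝ (Fin d)))
  (k : EuclideanSpace ℝ (Fin d) → ℝ)

lemma dunklWeight_nonneg (x : EuclideanSpace ℝ (Fin d)) : 0 ≤ dunklWeight Rp k x :=
  Finset.prod_nonneg fun ξ _ => Real.rpow_nonneg (abs_nonneg _) _

lemma dunklWeight_continuous (hk : ∀ ξ ∈ Rp, 0 ≤ k ξ) : Continuous (dunklWeight Rp k) := by
  refine continuous_finset_prod _ fun ξ hξ => ?_
  have h1 : Continuous fun x : EuclideanSpace ℝ (Fin d) => |(inner ℝ ξ x : ℝ)| :=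
    (continuous_const.inner continuous_id).abs
  exact (Real.continuous_rpow_const (by linarith [hk ξ hξ])).comp h1

lemma dunkl_closedBall_lt_top (hk : ∀ ξ ∈ Rp, 0 ≤ k ξ) (r : ℝ) :
    dunklMeasure Rp k (closedBall 0 r) < ⊤ := by
  obtain ⟨C, hC⟩ :=
    (isCompact_closedBall (0 : EuclideanSpace ℝ (Fin d)) r).exists_bound_of_continuousOn
      (dunklWeight_continuous Rp k hk).continuousOn
  have h0 : dunklMeasure Rp k (closedBall 0 r)
      = ∫⁻ x in closedBall 0 r, ENNReal.ofReal (dunklWeight Rp k x) ∂volume :=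
    withDensity_apply _ measurableSet_closedBall
  rw [h0]
  calc ∫⁻ x in closedBall 0 r, ENNReal.ofReal (dunklWeight Rp k x) ∂volume
      ≤ ∫⁻ _x in closedBall (0 : EuclideanSpace ℝ (Fin d)) r, ENNReal.ofReal C ∂volume := by
        refine setLIntegral_mono' measurableSet_closedBall fun x hx => ?_
        refine ENNReal.ofReal_le_ofReal ((le_abs_self _).trans ?_)
        simpa [Real.norm_eq_abs] using hC x hx
    _ = ENNReal.ofReal C * volume (closedBall (0 : EuclideanSpace ℝ (Fin d)) r) := by
        rw [setLIntegral_const]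
    _ < ⊤ := ENNReal.mul_lt_top ENNReal.ofReal_lt_top measure_closedBall_lt_top

lemma dunklWeight_zero_null (hRp : ∀ ξ ∈ Rp, ξ ≠ 0) :
    volume {x : EuclideanSpace ℝ (Fin d) | dunklWeight Rp k x = 0} = 0 := by
  have hsub : {x : EuclideanSpace ℝ (Fin d) | dunklWeight Rp k x = 0}
      ⊆ ⋃ ξ ∈ (Rp : Set (EuclideanSpace ℝ (Fin d))), {x | (inner ℝ ξ x : ℝ) = 0} := by
    intro x hx
    simp only [mem_setOf_eq, dunklWeight] at hx
    obtain ⟨ξ, hξ, h0⟩ := Finset.prod_eq_zero_iff.1 hx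
    have h2 : (2 * k ξ) ≠ 0 := by
      intro h; rw [h, Real.rpow_zero] at h0; exact one_ne_zero h0
    have h3 : |(inner ℝ ξ x : ℝ)| = 0 := (Real.rpow_eq_zero (abs_nonneg _) h2).mp h0
    exact mem_biUnion (Finset.mem_coe.mpr hξ) (abs_eq_zero.mp h3)
  refine measure_mono_null hsub
    ((measure_biUnion_null_iff (Rp.countable_toSet)).mpr fun ξ hξ => ?_)
  have hset : {x : EuclideanSpace ℝ (Fin d) | (inner ℝ ξ x : ℝ) = 0}
      = ((Submodule.span ℝ {ξ})ᗮ : Set (EuclideanSpace ℝ (Fin d))) := by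
    ext x; simp [Submodule.mem_orthogonal_singleton_iff_inner_right]
  rw [hset]
  refine Measure.addHaar_submodule _ _ (fun h => hRp ξ (Finset.mem_coe.mp hξ) ?_)
  have hmem : ξ ∈ (Submodule.span ℝ {ξ})ᗮ := h ▸ Submodule.mem_top
  exact inner_self_eq_zero.mp (Submodule.mem_orthogonal_singleton_iff_inner_right.mp hmem)

lemma dunkl_closedBall_pos (hRp : ∀ ξ ∈ Rp, ξ ≠ 0) (hk : ∀ ξ ∈ Rp, 0 ≤ k ξ)
    {r : ℝ} (hr : 0 < r) : 0 < dunklMeasure Rp k (closedBall 0 r) := by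
  rw [dunklMeasure, withDensity_apply _ measurableSet_closedBall]
  rw [lintegral_pos_iff_support ((dunklWeight_continuous Rp k hk).measurable.ennreal_ofReal)]
  have hZ : volume {x : EuclideanSpace ℝ (Fin d) | dunklWeight Rp k x = 0} = 0 :=
    dunklWeight_zero_null Rp k hRp
  have hsupp : Function.support (fun x => ENNReal.ofReal (dunklWeight Rp k x))
      = {x : EuclideanSpace ℝ (Fin d) | dunklWeight Rp k x = 0}ᶜ := by
    ext x
    simp only [Function.mem_support, ne_eq, ENNReal.ofReal_eq_zero, not_le,
      mem_compl_iff, mem_setOf_eq]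
    exact ⟨fun h => h.ne', fun h => (dunklWeight_nonneg Rp k x).lt_of_ne (Ne.symm h)⟩
  have hcl : IsClosed {x : EuclideanSpace ℝ (Fin d) | dunklWeight Rp k x = 0} :=
    isClosed_eq (dunklWeight_continuous Rp k hk) continuous_const
  rw [hsupp, Measure.restrict_apply hcl.isOpen_compl.measurableSet]
  have he : {x : EuclideanSpace ℝ (Fin d) | dunklWeight Rp k x = 0}ᶜ ∩ closedBall 0 r
      = closedBall 0 r \ {x : EuclideanSpace ℝ (Fin d) | dunklWeight Rp k x = 0} := by
    rw [diff_eq, inter_comm]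
  rw [he, measure_diff_null hZ]
  exact measure_closedBall_pos volume 0 hr

lemma dunkl_sublevel (hk : ∀ ξ ∈ Rp, 0 ≤ k ξ) (c : ℝ≥0∞) :
    dunklMeasure Rp k {x | dunklMeasure Rp k (closedBall 0 ‖x‖) < c} ≤ c := by
  set ν := dunklMeasure Rp k with hν
  haveI : IsLocallyFiniteMeasure ν := ⟨fun x => ⟨ball x 1, ball_mem_nhds x one_pos, by
    refine lt_of_le_of_lt (measure_mono fun y hy => ?_) (dunkl_closedBall_lt_top Rp k hk (‖x‖ + 1))
    have hdy : dist y x < 1 := mem_ball.mp hy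
    have h2 : ‖y‖ - ‖x‖ ≤ ‖y - x‖ := norm_sub_norm_le y x
    rw [← dist_eq_norm] at h2
    rw [mem_closedBall_zero_iff]
    linarith⟩⟩
  have hVmono : Monotone fun r : ℝ => ν (closedBall 0 r) :=
    fun r r' h => measure_mono (closedBall_subset_closedBall h)
  have hS : MeasurableSet {x : EuclideanSpace ℝ (Fin d) | ν (closedBall 0 ‖x‖) < c} :=
    measurableSet_lt (hVmono.measurable.comp measurable_norm) measurable_const
  by_contra hlt
  push_neg at hlt
  obtain ⟨K, hKS, hKc, hKlt⟩ := hS.exists_lt_isCompact hlt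
  have hKne : K.Nonempty := by
    rcases K.eq_empty_or_nonempty with h | h
    · rw [h, measure_empty] at hKlt
      exact absurd hKlt (not_lt.mpr (zero_le : 0 ≤ c))
    · exact h
  obtain ⟨x₀, hx₀K, hmax⟩ := hKc.exists_isMaxOn hKne continuous_norm.continuousOn
  have hKsub : ν K ≤ ν (closedBall 0 ‖x₀‖) :=
    measure_mono fun y hy => mem_closedBall_zero_iff.mpr (hmax hy)
  exact absurd (lt_of_lt_of_le hKlt (hKsub.trans (hKS hx₀K).le)) (lt_irrefl c)

end Aux

/-- For every `L²_k`-atom `a` supported in a closed ball `B(0,R)` centered at the origin,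
`‖H_k a‖_{L¹(ν_k)} ≤ 2`. -/
theorem eLpNorm_one_hardyOp_atom_le_two {d : ℕ} (hd : 0 < d)
    (Rp : Finset (EuclideanSpace ℝ (Fin d))) (hRp : ∀ ξ ∈ Rp, ξ ≠ 0)
    (k : EuclideanSpace ℝ (Fin d) → ℝ) (hk : ∀ ξ ∈ Rp, 0 ≤ k ξ)
    (a : EuclideanSpace ℝ (Fin d) → ℝ) (R : ℝ) (hR : 0 < R)
    (ha : IsL2Atom (dunklMeasure Rp k) a 0 R) :
    eLpNorm (hardyOp (dunklMeasure Rp k) a) 1 (dunklMeasure Rp k) ≤ 2 := by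
  classical
  obtain ⟨haL2, hsupp, hnorm, hintzero⟩ := ha
  set ν := dunklMeasure Rp k with hν
  set V : ℝ → ℝ≥0∞ := fun r => ν (closedBall 0 r) with hVdef
  have hVmono : Monotone V := fun r r' h => measure_mono (closedBall_subset_closedBall h)
  have hVlt : ∀ r, V r < ⊤ := fun r => dunkl_closedBall_lt_top Rp k hk r
  set W : ℝ≥0∞ := V R with hWdef
  have hWpos : 0 < W := dunkl_closedBall_pos Rp k hRp hk hR
  have hWne : W ≠ 0 := hWpos.ne'
  have hWnetop : W ≠ ⊤ := (hVlt R).ne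
  haveI : Nonempty (Fin d) := ⟨⟨0, hd⟩⟩
  -- the origin is null
  have hzero_null : ν {0} = 0 := by
    have h1 : volume ({0} : Set (EuclideanSpace ℝ (Fin d))) = 0 := by
      have he : ({0} : Set (EuclideanSpace ℝ (Fin d)))
          = ((⊥ : Submodule ℝ (EuclideanSpace ℝ (Fin d))) : Set _) := by simp
      rw [he]
      exact Measure.addHaar_submodule _ _ bot_ne_top
    exact (withDensity_absolutelyContinuous _ _) h1
  -- the L² bound
  have hT0 : 0 ≤ ∫ x, |a x| ^ 2 ∂ν := integral_nonneg fun x => sq_nonneg _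
  have hTle : ∫ x, |a x| ^ 2 ∂ν ≤ W.toReal⁻¹ := by
    have h2 := Real.rpow_le_rpow (Real.rpow_nonneg hT0 _) hnorm (by norm_num : (0:ℝ) ≤ 2)
    have e1 : ((∫ x, |a x| ^ 2 ∂ν) ^ ((1:ℝ)/2)) ^ (2:ℝ) = ∫ x, |a x| ^ 2 ∂ν := by
      rw [← Real.rpow_mul hT0]; norm_num
    have e2 : ((W.toReal) ^ (-(1:ℝ)/2)) ^ (2:ℝ) = W.toReal⁻¹ := by
      rw [← Real.rpow_mul ENNReal.toReal_nonneg]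
      norm_num [Real.rpow_neg_one]
    rw [e1, e2] at h2
    exact h2
  have hA2 : ∫⁻ x, (‖a x‖₊ : ℝ≥0∞) ^ (2:ℝ) ∂ν ≤ W⁻¹ := by
    have hint : Integrable (fun x => |a x| ^ 2) ν := by
      simpa [sq_abs] using haL2.integrable_sq
    have heq : ∫⁻ x, (‖a x‖₊ : ℝ≥0∞) ^ (2:ℝ) ∂ν = ENNReal.ofReal (∫ x, |a x| ^ 2 ∂ν) := by
      rw [ofReal_integral_eq_lintegral_ofReal hint (Eventually.of_forall fun x => sq_nonneg _)]
      refine lintegral_congr fun x => ?_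
      rw [← enorm_eq_nnnorm, Real.enorm_eq_ofReal_abs,
        ENNReal.ofReal_rpow_of_nonneg (abs_nonneg _) (by norm_num : (0:ℝ) ≤ 2)]
      rw [show ((2:ℝ)) = ((2:ℕ):ℝ) by norm_num, Real.rpow_natCast]
    rw [heq]
    calc ENNReal.ofReal (∫ x, |a x| ^ 2 ∂ν) ≤ ENNReal.ofReal W.toReal⁻¹ :=
          ENNReal.ofReal_le_ofReal hTle
      _ = W⁻¹ := by
          rw [ENNReal.ofReal_inv_of_pos (ENNReal.toReal_pos hWne hWnetop),
            ENNReal.ofReal_toReal hWnetop]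
  have haem : AEMeasurable (fun y => (‖a y‖₊ : ℝ≥0∞)) ν :=
    haL2.aestronglyMeasurable.aemeasurable.enorm
  -- Cauchy-Schwarz on balls
  have hCS : ∀ s : ℝ, (‖∫ y in closedBall (0 : EuclideanSpace ℝ (Fin d)) s, a y ∂ν‖₊ : ℝ≥0∞)
      ≤ W ^ (-(1:ℝ)/2) * (V s) ^ ((1:ℝ)/2) := by
    intro s
    have h1 : (‖∫ y in closedBall (0 : EuclideanSpace ℝ (Fin d)) s, a y ∂ν‖₊ : ℝ≥0∞)
        ≤ ∫⁻ y in closedBall (0 : EuclideanSpace ℝ (Fin d)) s, (‖a y‖₊ : ℝ≥0∞) ∂ν :=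
      enorm_integral_le_lintegral_enorm _
    have h2 := ENNReal.lintegral_mul_le_Lp_mul_Lq (ν.restrict (closedBall 0 s))
      (Real.holderConjugate_iff.mpr ⟨by norm_num, by norm_num⟩ : Real.HolderConjugate 2 2) haem.restrict aemeasurable_const
      (f := fun y => (‖a y‖₊ : ℝ≥0∞)) (g := fun _ => (1 : ℝ≥0∞))
    simp only [Pi.mul_apply, mul_one, ENNReal.one_rpow, lintegral_one,
      Measure.restrict_apply_univ] at h2
    have h3 : (∫⁻ y in closedBall (0 : EuclideanSpace ℝ (Fin d)) s, (‖a y‖₊ : ℝ≥0∞) ^ (2:ℝ) ∂ν)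
        ≤ W⁻¹ := le_trans (setLIntegral_le_lintegral _ _) hA2
    calc (‖∫ y in closedBall (0 : EuclideanSpace ℝ (Fin d)) s, a y ∂ν‖₊ : ℝ≥0∞)
        ≤ ∫⁻ y in closedBall (0 : EuclideanSpace ℝ (Fin d)) s, (‖a y‖₊ : ℝ≥0∞) ∂ν := h1
      _ ≤ (∫⁻ y in closedBall (0 : EuclideanSpace ℝ (Fin d)) s, (‖a y‖₊ : ℝ≥0∞) ^ (2:ℝ) ∂ν)
            ^ (1/(2:ℝ)) * (ν (closedBall 0 s)) ^ (1/(2:ℝ)) := h2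
      _ ≤ (W⁻¹) ^ (1/(2:ℝ)) * (V s) ^ (1/(2:ℝ)) := by
          gcongr
      _ = W ^ (-(1:ℝ)/2) * (V s) ^ ((1:ℝ)/2) := by
          rw [ENNReal.inv_rpow, ← ENNReal.rpow_neg]
          norm_num
  -- pointwise bound
  have hpoint : ∀ x, (‖hardyOp ν a x‖₊ : ℝ≥0∞)
      ≤ W ^ (-(1:ℝ)/2) * (V ‖x‖) ^ (-(1:ℝ)/2) := by
    intro x
    by_cases hx : V ‖x‖ = 0
    · rw [hx, ENNReal.zero_rpow_of_neg (by norm_num), ENNReal.mul_top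
        (by simp [ENNReal.rpow_eq_zero_iff, hWne, hWnetop])]
      exact le_top
    · have hVxt : V ‖x‖ ≠ ⊤ := (hVlt ‖x‖).ne
      show (‖(ν (closedBall 0 ‖x‖)).toReal⁻¹
          * ∫ y in closedBall (0 : EuclideanSpace ℝ (Fin d)) ‖x‖, a y ∂ν‖₊ : ℝ≥0∞) ≤ _
      rw [nnnorm_mul, ENNReal.coe_mul]
      have h1 : ((‖(ν (closedBall 0 ‖x‖)).toReal⁻¹‖₊ : ℝ≥0) : ℝ≥0∞) = (V ‖x‖)⁻¹ := by
        rw [← enorm_eq_nnnorm, Real.enorm_eq_ofReal (inv_nonneg.mpr ENNReal.toReal_nonneg),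
          ENNReal.ofReal_inv_of_pos (ENNReal.toReal_pos hx hVxt),
          ENNReal.ofReal_toReal hVxt]
      rw [h1]
      calc (V ‖x‖)⁻¹ * (‖∫ y in closedBall (0 : EuclideanSpace ℝ (Fin d)) ‖x‖, a y ∂ν‖₊ : ℝ≥0∞)
          ≤ (V ‖x‖)⁻¹ * (W ^ (-(1:ℝ)/2) * (V ‖x‖) ^ ((1:ℝ)/2)) := by
            gcongr
            exact hCS ‖x‖
        _ = W ^ (-(1:ℝ)/2) * ((V ‖x‖)⁻¹ * (V ‖x‖) ^ ((1:ℝ)/2)) := by ring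
        _ = W ^ (-(1:ℝ)/2) * (V ‖x‖) ^ (-(1:ℝ)/2) := by
            congr 1
            rw [← ENNReal.rpow_neg_one (V ‖x‖), ← ENNReal.rpow_add _ _ hx hVxt]
            norm_num
  -- vanishing outside the ball
  have houter : ∀ x : EuclideanSpace ℝ (Fin d), R ≤ ‖x‖ → hardyOp ν a x = 0 := by
    intro x hx
    have hzero' : ∀ z, z ∉ closedBall (0 : EuclideanSpace ℝ (Fin d)) R → a z = 0 := by
      intro z hz
      by_contra h
      exact hz (hsupp (Function.mem_support.mpr h))
    have h1 : ∫ y in closedBall (0 : EuclideanSpace ℝ (Fin d)) ‖x‖, a y ∂ν = ∫ y, a y ∂ν :=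
      setIntegral_eq_integral_of_forall_compl_eq_zero fun z hz =>
        hzero' z fun hzz => hz (closedBall_subset_closedBall hx hzz)
    have h2 : ∫ y in closedBall (0 : EuclideanSpace ℝ (Fin d)) R, a y ∂ν = ∫ y, a y ∂ν :=
      setIntegral_eq_integral_of_forall_compl_eq_zero hzero'
    show (ν (closedBall 0 ‖x‖)).toReal⁻¹
        * ∫ y in closedBall (0 : EuclideanSpace ℝ (Fin d)) ‖x‖, a y ∂ν = 0
    rw [h1, ← h2, hintzero, mul_zero]
  -- the key sublevel integral bound
  set μb := ν.restrict (ball (0 : EuclideanSpace ℝ (Fin d)) R) with hμb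
  set w₀ := W.toReal with hw₀def
  have hw₀ : 0 < w₀ := ENNReal.toReal_pos hWne hWnetop
  set c₀ := (Real.sqrt w₀)⁻¹ with hc₀def
  have hc₀ : 0 < c₀ := inv_pos.mpr (Real.sqrt_pos.mpr hw₀)
  set g : EuclideanSpace ℝ (Fin d) → ℝ := fun x => (Real.sqrt ((V ‖x‖).toReal))⁻¹ with hgdef
  have hgmeas : Measurable g :=
    (Real.continuous_sqrt.measurable.comp
      ((hVmono.measurable.comp measurable_norm).ennreal_toReal)).inv
  have hsqrtW : ENNReal.ofReal (Real.sqrt w₀) = W ^ ((1:ℝ)/2) := by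
    rw [Real.sqrt_eq_rpow, ENNReal.toReal_rpow, ENNReal.ofReal_toReal]
    simp [ENNReal.rpow_eq_top_iff, hWne, hWnetop]
  have hgeq : ∀ᵐ x ∂μb, (V ‖x‖) ^ (-(1:ℝ)/2) = ENNReal.ofReal (g x) := by
    have hne : ∀ᵐ x ∂μb, x ≠ (0 : EuclideanSpace ℝ (Fin d)) := by
      rw [ae_iff]
      have he : {x : EuclideanSpace ℝ (Fin d) | ¬x ≠ 0} = {(0 : EuclideanSpace ℝ (Fin d))} := by
        ext y; simp
      rw [he]
      exact le_antisymm (le_trans (Measure.restrict_apply_le _ _) hzero_null.le) zero_le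
    refine hne.mono fun x hx => ?_
    have hVx0 : V ‖x‖ ≠ 0 :=
      (dunkl_closedBall_pos Rp k hRp hk (norm_pos_iff.mpr hx)).ne'
    have hVxt : V ‖x‖ ≠ ⊤ := (hVlt ‖x‖).ne
    have hg1 : g x = ((V ‖x‖).toReal) ^ (-(1:ℝ)/2) := by
      rw [hgdef]
      simp only
      rw [Real.sqrt_eq_rpow, ← Real.rpow_neg_one, ← Real.rpow_mul ENNReal.toReal_nonneg]
      norm_num
    rw [hg1, ENNReal.toReal_rpow, ENNReal.ofReal_toReal]
    simp [ENNReal.rpow_eq_top_iff, hVx0, hVxt]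
  have Jlayer : ∫⁻ x, (V ‖x‖) ^ (-(1:ℝ)/2) ∂μb
      = ∫⁻ t in Ioi (0:ℝ), μb {x | t < g x} := by
    rw [lintegral_congr_ae hgeq,
      lintegral_eq_lintegral_meas_lt μb
        (Eventually.of_forall fun x => inv_nonneg.mpr (Real.sqrt_nonneg _))
        hgmeas.aemeasurable]
  have J2 : ∀ t ∈ Ioi (0:ℝ), μb {x | t < g x} ≤ min (ENNReal.ofReal ((t⁻¹) ^ 2)) W := by
    intro t ht
    rw [mem_Ioi] at ht
    refine le_min ?_ ?_
    · refine le_trans (Measure.restrict_apply_le _ _)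
        (le_trans (measure_mono ?_) (dunkl_sublevel Rp k hk _))
      intro x hx
      simp only [mem_setOf_eq] at hx ⊢
      have hv0 : 0 ≤ (V ‖x‖).toReal := ENNReal.toReal_nonneg
      have hsv : 0 < Real.sqrt ((V ‖x‖).toReal) := by
        rcases lt_or_eq_of_le (Real.sqrt_nonneg ((V ‖x‖).toReal)) with h | h
        · exact h
        · rw [hgdef] at hx
          simp only [← h, inv_zero] at hx
          linarith
      have h1 : Real.sqrt ((V ‖x‖).toReal) < t⁻¹ := by
        have h2 : ((Real.sqrt ((V ‖x‖).toReal))⁻¹)⁻¹ < t⁻¹ := inv_strictAnti₀ ht hx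
        rwa [inv_inv] at h2
      have h2 : (V ‖x‖).toReal < (t⁻¹) ^ 2 := by
        have h3 := mul_self_lt_mul_self (Real.sqrt_nonneg _) h1
        rw [Real.mul_self_sqrt hv0] at h3
        nlinarith
      calc (V ‖x‖ : ℝ≥0∞) = ENNReal.ofReal ((V ‖x‖).toReal) :=
            (ENNReal.ofReal_toReal (hVlt ‖x‖).ne).symm
        _ < ENNReal.ofReal ((t⁻¹) ^ 2) := by
            rw [ENNReal.ofReal_lt_ofReal_iff_of_nonneg hv0]
            exact h2
    · refine le_trans (measure_mono (subset_univ _)) ?_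
      rw [Measure.restrict_apply_univ]
      exact measure_mono ball_subset_closedBall
  have piece1 : ∫⁻ t in Ioc (0:ℝ) c₀, min (ENNReal.ofReal ((t⁻¹) ^ 2)) W ≤ W ^ ((1:ℝ)/2) := by
    calc ∫⁻ t in Ioc (0:ℝ) c₀, min (ENNReal.ofReal ((t⁻¹) ^ 2)) W
        ≤ ∫⁻ _t in Ioc (0:ℝ) c₀, W := lintegral_mono fun t => min_le_right _ _
      _ = W * ENNReal.ofReal c₀ := by
          rw [setLIntegral_const, Real.volume_Ioc]
          norm_num
      _ = W ^ ((1:ℝ)/2) := by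
          rw [hc₀def, ENNReal.ofReal_inv_of_pos (Real.sqrt_pos.mpr hw₀), hsqrtW,
            ← ENNReal.rpow_neg]
          nth_rewrite 1 [← ENNReal.rpow_one W]
          rw [← ENNReal.rpow_add _ _ hWne hWnetop]
          congr 1
          norm_num
  have piece2 : ∫⁻ t in Ioi c₀, min (ENNReal.ofReal ((t⁻¹) ^ 2)) W ≤ W ^ ((1:ℝ)/2) := by
    have heqon : EqOn (fun t : ℝ => t ^ (-2:ℝ)) (fun t : ℝ => (t⁻¹) ^ 2) (Ioi c₀) := by
      intro t ht
      rw [mem_Ioi] at ht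
      have ht0 : 0 < t := lt_trans hc₀ ht
      show t ^ (-2:ℝ) = (t⁻¹) ^ 2
      rw [inv_pow, ← Real.rpow_natCast t 2, ← Real.rpow_neg ht0.le]
      norm_num
    have hint : IntegrableOn (fun t : ℝ => (t⁻¹) ^ 2) (Ioi c₀) volume :=
      (integrableOn_Ioi_rpow_of_lt (by norm_num : (-2:ℝ) < -1) hc₀).congr_fun heqon
        measurableSet_Ioi
    have hval : ∫ t in Ioi c₀, (t⁻¹) ^ 2 = c₀⁻¹ := by
      rw [← setIntegral_congr_fun measurableSet_Ioi heqon,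
        integral_Ioi_rpow_of_lt (by norm_num : (-2:ℝ) < -1) hc₀]
      norm_num [Real.rpow_neg_one]
    calc ∫⁻ t in Ioi c₀, min (ENNReal.ofReal ((t⁻¹) ^ 2)) W
        ≤ ∫⁻ t in Ioi c₀, ENNReal.ofReal ((t⁻¹) ^ 2) := lintegral_mono fun t => min_le_left _ _
      _ = ENNReal.ofReal (∫ t in Ioi c₀, (t⁻¹) ^ 2) :=
          (ofReal_integral_eq_lintegral_ofReal hint
            (Eventually.of_forall fun t => sq_nonneg _)).symm
      _ = W ^ ((1:ℝ)/2) := by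
          rw [hval, hc₀def, inv_inv, hsqrtW]
  have Jbound : ∫⁻ x, (V ‖x‖) ^ (-(1:ℝ)/2) ∂μb ≤ W ^ ((1:ℝ)/2) + W ^ ((1:ℝ)/2) := by
    rw [Jlayer]
    have hmeasmin : Measurable fun t : ℝ => min (ENNReal.ofReal ((t⁻¹) ^ 2)) W :=
      ((measurable_inv.pow_const 2).ennreal_ofReal).min measurable_const
    calc ∫⁻ t in Ioi (0:ℝ), μb {x | t < g x}
        ≤ ∫⁻ t in Ioi (0:ℝ), min (ENNReal.ofReal ((t⁻¹) ^ 2)) W :=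
          setLIntegral_mono hmeasmin J2
      _ = (∫⁻ t in Ioc (0:ℝ) c₀, min (ENNReal.ofReal ((t⁻¹) ^ 2)) W)
            + ∫⁻ t in Ioi c₀, min (ENNReal.ofReal ((t⁻¹) ^ 2)) W := by
          rw [← Ioc_union_Ioi_eq_Ioi hc₀.le,
            lintegral_union measurableSet_Ioi (Ioc_disjoint_Ioi le_rfl)]
      _ ≤ W ^ ((1:ℝ)/2) + W ^ ((1:ℝ)/2) := add_le_add piece1 piece2
  -- final computation
  rw [eLpNorm_one_eq_lintegral_enorm]
  have hWW : W ^ (-(1:ℝ)/2) * W ^ ((1:ℝ)/2) = 1 := by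
    rw [← ENNReal.rpow_add _ _ hWne hWnetop]
    norm_num
  calc ∫⁻ x, (‖hardyOp ν a x‖₊ : ℝ≥0∞) ∂ν
      = ∫⁻ x in ball (0 : EuclideanSpace ℝ (Fin d)) R, (‖hardyOp ν a x‖₊ : ℝ≥0∞) ∂ν := by
        rw [← lintegral_indicator measurableSet_ball]
        refine lintegral_congr fun x => ?_
        by_cases hx : x ∈ ball (0 : EuclideanSpace ℝ (Fin d)) R
        · rw [indicator_of_mem hx]
        · rw [indicator_of_notMem hx,
            houter x (by simpa [mem_ball_zero_iff, not_lt] using hx)]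
          simp
    _ ≤ ∫⁻ x in ball (0 : EuclideanSpace ℝ (Fin d)) R,
          W ^ (-(1:ℝ)/2) * (V ‖x‖) ^ (-(1:ℝ)/2) ∂ν := lintegral_mono fun x => hpoint x
    _ = W ^ (-(1:ℝ)/2) * ∫⁻ x, (V ‖x‖) ^ (-(1:ℝ)/2) ∂μb := by
        rw [← hμb]
        exact lintegral_const_mul' _ _ (by simp [ENNReal.rpow_eq_top_iff, hWne, hWnetop])
    _ ≤ W ^ (-(1:ℝ)/2) * (W ^ ((1:ℝ)/2) + W ^ ((1:ℝ)/2)) := by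
        gcongr
    _ = 2 * (W ^ (-(1:ℝ)/2) * W ^ ((1:ℝ)/2)) := by ring
    _ = 2 := by rw [hWW, mul_one]
end
end

section
/- For every $f$ in the atomic Hardy space $H^1_k(\mathbb{R}^d)$ (with atoms supported in closed balls centered at the origin), one has $\|\mathcal{H}_k f\|_{L^1(\nu_k)} \leq 2\, \|f\|_{H^1_k}$. -/
open MeasureTheory Metric Filter Topology Set

noncomputable section

/-- `f = ∑_j λ_j a_j` is an atomic decomposition with `L²_k`-atoms supported in closed
balls centered at the origin, the series converging in `L¹(ν_k)` and in `L²(ν_k)`,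
and `∑_j |λ_j| < ∞`. -/
def IsAtomicDecompO {d : ℕ} (ν : Measure (EuclideanSpace ℝ (Fin d)))
    (f : EuclideanSpace ℝ (Fin d) → ℝ) (lam : ℕ → ℝ)
    (a : ℕ → EuclideanSpace ℝ (Fin d) → ℝ) : Prop :=
  (∀ j, ∃ R : ℝ, 0 < R ∧ IsL2Atom ν (a j) 0 R) ∧
    Summable (fun j => |lam j|) ∧
    Tendsto (fun N => eLpNorm (fun x => f x - ∑ j ∈ Finset.range N, lam j * a j x) 1 ν)
      atTop (nhds 0) ∧
    Tendsto (fun N => eLpNorm (fun x => f x - ∑ j ∈ Finset.range N, lam j * a j x) 2 ν)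
      atTop (nhds 0)

/-- `f` belongs to the atomic Hardy space `H¹_k` (atoms centered at the origin). -/
def MemH1O {d : ℕ} (ν : Measure (EuclideanSpace ℝ (Fin d)))
    (f : EuclideanSpace ℝ (Fin d) → ℝ) : Prop :=
  MemLp f 1 ν ∧ MemLp f 2 ν ∧ ∃ lam a, IsAtomicDecompO ν f lam a

/-- The atomic `H¹_k` norm: infimum of `∑_j |λ_j|` over all atomic decompositions. -/
def H1normO {d : ℕ} (ν : Measure (EuclideanSpace ℝ (Fin d)))
    (f : EuclideanSpace ℝ (Fin d) → ℝ) : ℝ :=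
  sInf {s : ℝ | ∃ lam a, IsAtomicDecompO ν f lam a ∧ s = ∑' j, |lam j|}


open scoped ENNReal

namespace HardyAux


variable {d : ℕ} {ν : MeasureTheory.Measure (EuclideanSpace ℝ (Fin d))}

lemma continuous_dunklWeight (Rp : Finset (EuclideanSpace ℝ (Fin d)))
    (k : EuclideanSpace ℝ (Fin d) → ℝ) (hk : ∀ ξ ∈ Rp, 0 ≤ k ξ) :
    Continuous (dunklWeight Rp k) := by
  apply continuous_finset_prod
  intro ξ hξ
  exact ((continuous_const.inner continuous_id).abs).rpow_const
    (fun x => Or.inr (by have := hk ξ hξ; linarith))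

lemma nonneg_dunklWeight (Rp : Finset (EuclideanSpace ℝ (Fin d)))
    (k : EuclideanSpace ℝ (Fin d) → ℝ) (x : EuclideanSpace ℝ (Fin d)) :
    0 ≤ dunklWeight Rp k x :=
  Finset.prod_nonneg fun ξ _ => Real.rpow_nonneg (abs_nonneg _) _

lemma dunklMeasure_closedBall_ne_top (Rp : Finset (EuclideanSpace ℝ (Fin d)))
    (k : EuclideanSpace ℝ (Fin d) → ℝ) (hk : ∀ ξ ∈ Rp, 0 ≤ k ξ) (c : EuclideanSpace ℝ (Fin d))
    (r : ℝ) : dunklMeasure Rp k (closedBall c r) ≠ ∞ := by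
  obtain ⟨C, hC⟩ : ∃ C, ∀ y ∈ (dunklWeight Rp k) '' (closedBall c r), y ≤ C := by
    obtain ⟨C, hC⟩ := (isCompact_closedBall c r).bddAbove_image
      (continuous_dunklWeight Rp k hk).continuousOn
    exact ⟨C, fun y hy => hC hy⟩
  rw [dunklMeasure, withDensity_apply _ measurableSet_closedBall]
  have hb : ∫⁻ x in closedBall c r, ENNReal.ofReal (dunklWeight Rp k x) ∂volume
      ≤ ∫⁻ _ in closedBall c r, ENNReal.ofReal C ∂volume := by
    apply setLIntegral_mono measurable_const
    intro x hx
    exact ENNReal.ofReal_le_ofReal (hC _ (mem_image_of_mem _ hx))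
  refine ne_top_of_le_ne_top ?_ hb
  rw [setLIntegral_const]
  exact (ENNReal.mul_lt_top ENNReal.ofReal_lt_top measure_closedBall_lt_top).ne

lemma dunklMeasure_null_of_volume_null (Rp : Finset (EuclideanSpace ℝ (Fin d)))
    (k : EuclideanSpace ℝ (Fin d) → ℝ) {s : Set (EuclideanSpace ℝ (Fin d))}
    (hs : volume s = 0) : dunklMeasure Rp k s = 0 :=
  withDensity_absolutelyContinuous volume _ hs

lemma volume_singleton_zero (hd : 0 < d) :
    volume ({0} : Set (EuclideanSpace ℝ (Fin d))) = 0 := by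
  haveI : Nonempty (Fin d) := ⟨⟨0, hd⟩⟩
  have hb : (⊥ : Submodule ℝ (EuclideanSpace ℝ (Fin d))) ≠ ⊤ := by
    intro h
    obtain ⟨x, hx⟩ := exists_ne (0 : EuclideanSpace ℝ (Fin d))
    have : x ∈ (⊥ : Submodule ℝ (EuclideanSpace ℝ (Fin d))) := h ▸ Submodule.mem_top
    exact hx (by simpa using this)
  have := Measure.addHaar_submodule (volume : Measure (EuclideanSpace ℝ (Fin d))) ⊥ hb
  simpa using this

lemma dunklMeasure_closedBall_pos (hd : 0 < d) (Rp : Finset (EuclideanSpace ℝ (Fin d)))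
    (hRp : ∀ ξ ∈ Rp, ξ ≠ 0) (k : EuclideanSpace ℝ (Fin d) → ℝ) (hk : ∀ ξ ∈ Rp, 0 ≤ k ξ)
    {r : ℝ} (hr : 0 < r) : dunklMeasure Rp k (closedBall (0 : EuclideanSpace ℝ (Fin d)) r) ≠ 0 := by
  haveI : Nonempty (Fin d) := ⟨⟨0, hd⟩⟩
  intro h0
  rw [dunklMeasure, withDensity_apply _ measurableSet_closedBall] at h0
  have hmeas : Measurable fun x => ENNReal.ofReal (dunklWeight Rp k x) :=
    ENNReal.measurable_ofReal.comp (continuous_dunklWeight Rp k hk).measurable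
  rw [lintegral_eq_zero_iff hmeas] at h0
  -- h0 : ofReal ∘ w =ᵐ[volume.restrict ball] 0
  have hZ : {x : EuclideanSpace ℝ (Fin d) | dunklWeight Rp k x = 0} ⊆
      ⋃ ξ ∈ Rp, ((LinearMap.ker ((innerSL ℝ ξ : EuclideanSpace ℝ (Fin d) →L[ℝ] ℝ) : EuclideanSpace ℝ (Fin d) →ₗ[ℝ] ℝ) : Submodule ℝ (EuclideanSpace ℝ (Fin d))) :
        Set (EuclideanSpace ℝ (Fin d))) := by
    intro x hx
    simp only [mem_setOf_eq, dunklWeight] at hx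
    obtain ⟨ξ, hξ, hfac⟩ := Finset.prod_eq_zero_iff.mp hx
    have : |(inner ℝ ξ x : ℝ)| = 0 := by
      by_contra habs
      have h1 : (0:ℝ) < |(inner ℝ ξ x : ℝ)| := lt_of_le_of_ne (abs_nonneg _) (Ne.symm habs)
      exact absurd hfac (ne_of_gt (Real.rpow_pos_of_pos h1 _))
    simp only [abs_eq_zero] at this
    refine mem_biUnion hξ ?_
    simpa [LinearMap.mem_ker] using this
  have hZnull : volume {x : EuclideanSpace ℝ (Fin d) | dunklWeight Rp k x = 0} = 0 := by
    refine measure_mono_null hZ ?_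
    refine (measure_biUnion_null_iff Rp.countable_toSet).mpr ?_
    intro ξ hξ
    apply Measure.addHaar_submodule
    intro h
    have : ξ ∈ LinearMap.ker ((innerSL ℝ ξ : EuclideanSpace ℝ (Fin d) →L[ℝ] ℝ) : EuclideanSpace ℝ (Fin d) →ₗ[ℝ] ℝ) := h ▸ Submodule.mem_top
    rw [LinearMap.mem_ker] at this
    have : (inner ℝ ξ ξ : ℝ) = 0 := this
    exact hRp ξ hξ (inner_self_eq_zero.mp this)
  -- volume of ball is positive, but w = 0 a.e. on ball
  have hae : ∀ᵐ x ∂(volume.restrict (closedBall (0:EuclideanSpace ℝ (Fin d)) r)),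
      dunklWeight Rp k x = 0 := by
    filter_upwards [h0] with x hx
    have := ENNReal.ofReal_eq_zero.mp hx
    exact le_antisymm this (nonneg_dunklWeight Rp k x)
  have : volume.restrict (closedBall (0:EuclideanSpace ℝ (Fin d)) r)
      {x | ¬ dunklWeight Rp k x = 0} = 0 := hae
  rw [Measure.restrict_apply₀' measurableSet_closedBall.nullMeasurableSet] at this
  have hball : volume (closedBall (0:EuclideanSpace ℝ (Fin d)) r) = 0 := by
    have hsplit : volume (closedBall (0:EuclideanSpace ℝ (Fin d)) r) ≤
        volume ({x | ¬ dunklWeight Rp k x = 0} ∩ closedBall (0:EuclideanSpace ℝ (Fin d)) r) +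
        volume {x : EuclideanSpace ℝ (Fin d) | dunklWeight Rp k x = 0} := by
      refine le_trans (measure_mono ?_) (measure_union_le _ _)
      intro x hx
      by_cases hw : dunklWeight Rp k x = 0
      · exact Or.inr hw
      · exact Or.inl ⟨hw, hx⟩
    rw [this, hZnull] at hsplit
    simpa using hsplit
  exact absurd hball (measure_closedBall_pos volume _ hr).ne'

lemma dunklMeasure_singleton_zero (hd : 0 < d) (Rp : Finset (EuclideanSpace ℝ (Fin d)))
    (k : EuclideanSpace ℝ (Fin d) → ℝ) :
    dunklMeasure Rp k ({0} : Set (EuclideanSpace ℝ (Fin d))) = 0 :=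
  dunklMeasure_null_of_volume_null Rp k (volume_singleton_zero hd)



/-- The measure of the sublevel set of `r ↦ ν (closedBall 0 r)` is at most the level. -/
lemma measure_sublevel_le (ν : Measure (EuclideanSpace ℝ (Fin d))) (c : ℝ≥0∞) :
    ν {x : EuclideanSpace ℝ (Fin d) | ν (closedBall 0 ‖x‖) < c} ≤ c := by
  set F : ℝ → ℝ≥0∞ := fun r => ν (closedBall 0 r) with hF
  set S := {x : EuclideanSpace ℝ (Fin d) | F ‖x‖ < c} with hS
  have hFmono : Monotone F := fun r r' h => measure_mono (closedBall_subset_closedBall h)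
  set A : Set ℝ := {r | F r < c} with hA
  have hdown : ∀ {r r' : ℝ}, r' ≤ r → r ∈ A → r' ∈ A := fun h hr => lt_of_le_of_lt (hFmono h) hr
  by_cases hall : ∀ r : ℝ, r ∈ A
  · have huniv : ν (univ : Set (EuclideanSpace ℝ (Fin d))) ≤ c := by
      rw [← iUnion_closedBall_nat (0 : EuclideanSpace ℝ (Fin d))]
      have hmono : Monotone fun n : ℕ => closedBall (0 : EuclideanSpace ℝ (Fin d)) n :=
        fun m n h => closedBall_subset_closedBall (by exact_mod_cast h)
      rw [hmono.measure_iUnion]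
      exact iSup_le fun n => (hall n).le
    exact le_trans (measure_mono (subset_univ S)) huniv
  · push_neg at hall
    obtain ⟨b, hb⟩ := hall
    have hbdd : BddAbove A := ⟨b, fun r hr => by
      by_contra hrb
      exact hb (hdown (le_of_lt (lt_of_not_ge hrb)) hr)⟩
    rcases eq_empty_or_nonempty A with hAe | hAne
    · have : S = ∅ := by
        ext x; simp only [hS, mem_setOf_eq, mem_empty_iff_false, iff_false]
        intro hx
        exact (eq_empty_iff_forall_notMem.mp hAe) ‖x‖ hx
      simp [this]
    set s := sSup A with hs
    by_cases hsA : s ∈ A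
    · have hSsub : S ⊆ closedBall 0 s := by
        intro x hx
        rw [mem_closedBall_zero_iff]
        exact le_csSup hbdd hx
      exact le_trans (measure_mono hSsub) hsA.le
    · have hSsub : S ⊆ ball 0 s := by
        intro x hx
        rw [mem_ball_zero_iff]
        have h1 : ‖x‖ ≤ s := le_csSup hbdd hx
        rcases lt_or_eq_of_le h1 with h | h
        · exact h
        · exact absurd (h ▸ hx) hsA
      have hballeq : ball (0 : EuclideanSpace ℝ (Fin d)) s =
          ⋃ n : ℕ, closedBall (0 : EuclideanSpace ℝ (Fin d)) (s - 1/(n+1)) := by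
        ext x
        simp only [mem_ball_zero_iff, mem_iUnion, mem_closedBall_zero_iff]
        constructor
        · intro hx
          obtain ⟨n, hn⟩ := exists_nat_one_div_lt (sub_pos.mpr hx)
          exact ⟨n, by push_cast at hn ⊢; linarith⟩
        · intro ⟨n, hn⟩
          have : (0:ℝ) < 1/(n+1) := by positivity
          linarith
      have hmono : Monotone fun n : ℕ => closedBall (0 : EuclideanSpace ℝ (Fin d)) (s - 1/(n+1)) := by
        intro m n h
        apply closedBall_subset_closedBall
        have hmn : (m:ℝ) ≤ n := by exact_mod_cast h
        have : (1:ℝ)/(n+1) ≤ 1/(m+1) := by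
          apply one_div_le_one_div_of_le (by positivity)
          linarith
        linarith
      calc ν S ≤ ν (ball 0 s) := measure_mono hSsub
        _ = ⨆ n : ℕ, F (s - 1/(n+1)) := by rw [hballeq, hmono.measure_iUnion]
        _ ≤ c := by
          apply iSup_le
          intro n
          have hlt : s - 1/(n+1) < s := by
            have : (0:ℝ) < 1/(n+1) := by positivity
            linarith
          obtain ⟨a, haA, hla⟩ := exists_lt_of_lt_csSup hAne hlt
          exact (hdown hla.le haA).le



lemma key_lintegral (hfin : ∀ r : ℝ, ν (closedBall 0 r) ≠ ⊤)
    (hpos : ∀ r : ℝ, 0 < r → ν (closedBall 0 r) ≠ 0)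
    (hzero : ν ({0} : Set (EuclideanSpace ℝ (Fin d))) = 0) {R : ℝ} (hR : 0 < R) :
    ∫⁻ x in ball 0 R, (ν (closedBall 0 ‖x‖)) ^ (-(1:ℝ)/2) ∂ν
      ≤ 2 * (ν (closedBall 0 R)) ^ ((1:ℝ)/2) := by
  set M := ν (closedBall 0 R) with hM
  have hM0 : M ≠ 0 := hpos R hR
  have hMt : M ≠ ⊤ := hfin R
  set m := M.toReal with hm'
  have hm : 0 < m := ENNReal.toReal_pos hM0 hMt
  set F : ℝ → ℝ≥0∞ := fun r => ν (closedBall 0 r) with hF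
  have hFmono : Monotone F := fun r r' h => measure_mono (closedBall_subset_closedBall h)
  have hFmeas : Measurable F := hFmono.measurable
  set f : EuclideanSpace ℝ (Fin d) → ℝ := fun x => (F ‖x‖).toReal ^ (-(1:ℝ)/2) with hf
  haveI : IsFiniteMeasure (ν.restrict (ball 0 R)) := by
    constructor
    rw [Measure.restrict_apply_univ]
    exact lt_of_le_of_lt (measure_mono ball_subset_closedBall) (hfin R).lt_top
  have hae0 : ∀ᵐ x ∂ν, x ≠ (0 : EuclideanSpace ℝ (Fin d)) := by
    rw [ae_iff]
    convert hzero using 2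
    ext x; simp
  have step0 : ∫⁻ x in ball 0 R, (F ‖x‖) ^ (-(1:ℝ)/2) ∂ν
      = ∫⁻ x in ball 0 R, ENNReal.ofReal (f x) ∂ν := by
    apply lintegral_congr_ae
    filter_upwards [ae_restrict_of_ae hae0] with x hx
    have hnx : (0:ℝ) < ‖x‖ := norm_pos_iff.mpr hx
    have h1 : F ‖x‖ ≠ 0 := hpos _ hnx
    have h2 : F ‖x‖ ≠ ⊤ := hfin _
    rw [hf]
    rw [← ENNReal.ofReal_rpow_of_pos (ENNReal.toReal_pos h1 h2), ENNReal.ofReal_toReal h2]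
  have f_nn : 0 ≤ᵐ[ν.restrict (ball 0 R)] f :=
    Eventually.of_forall fun x => Real.rpow_nonneg ENNReal.toReal_nonneg _
  have f_mble : Measurable f := by
    have h1 : Measurable fun x : EuclideanSpace ℝ (Fin d) => (F ‖x‖).toReal :=
      ENNReal.measurable_toReal.comp (hFmeas.comp measurable_norm)
    fun_prop
  have hbound_meas : Measurable fun t : ℝ => min M (ENNReal.ofReal (t ^ (-2:ℝ))) := by
    fun_prop
  have step1 : ∫⁻ x in ball 0 R, ENNReal.ofReal (f x) ∂ν
      = ∫⁻ t in Ioi (0:ℝ), (ν.restrict (ball 0 R)) {a | t < f a} :=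
    lintegral_eq_lintegral_meas_lt (ν.restrict (ball 0 R)) f_nn f_mble.aemeasurable
  have step2 : ∫⁻ t in Ioi (0:ℝ), (ν.restrict (ball 0 R)) {a | t < f a}
      ≤ ∫⁻ t in Ioi (0:ℝ), min M (ENNReal.ofReal (t ^ (-2:ℝ))) := by
    apply setLIntegral_mono hbound_meas
    intro t ht
    rw [mem_Ioi] at ht
    refine le_min ?_ ?_
    · calc (ν.restrict (ball 0 R)) {a | t < f a} ≤ (ν.restrict (ball 0 R)) univ :=
            measure_mono (subset_univ _)
        _ = ν (ball 0 R) := Measure.restrict_apply_univ _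
        _ ≤ M := measure_mono ball_subset_closedBall
    · rw [Measure.restrict_apply' measurableSet_ball]
      refine le_trans (measure_mono ?_) (measure_sublevel_le ν (ENNReal.ofReal (t ^ (-2:ℝ))))
      rintro x ⟨hxf, _⟩
      simp only [mem_setOf_eq] at hxf ⊢
      show F ‖x‖ < ENNReal.ofReal (t ^ (-2:ℝ))
      have hxFt : F ‖x‖ ≠ ⊤ := hfin _
      have ht2 : 0 < t ^ (-2:ℝ) := Real.rpow_pos_of_pos ht _
      by_cases hu : (F ‖x‖).toReal = 0
      · have hF0 : F ‖x‖ = 0 := by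
          rcases ENNReal.toReal_eq_zero_iff _ |>.mp hu with h | h
          · exact h
          · exact absurd h hxFt
        rw [hF0]
        exact ENNReal.ofReal_pos.mpr ht2
      · have hu' : 0 < (F ‖x‖).toReal := lt_of_le_of_ne ENNReal.toReal_nonneg (Ne.symm hu)
        have key : (F ‖x‖).toReal < t ^ (-2:ℝ) := by
          have h3 := Real.rpow_lt_rpow_of_neg ht hxf (by norm_num : (-2:ℝ) < 0)
          have h4 : ((F ‖x‖).toReal ^ (-(1:ℝ)/2)) ^ (-2:ℝ) = (F ‖x‖).toReal := by
            rw [← Real.rpow_mul hu'.le]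
            norm_num
          rwa [h4] at h3
        calc F ‖x‖ = ENNReal.ofReal (F ‖x‖).toReal := (ENNReal.ofReal_toReal hxFt).symm
          _ < ENNReal.ofReal (t ^ (-2:ℝ)) := (ENNReal.ofReal_lt_ofReal_iff ht2).mpr key
  have hMhalf : ENNReal.ofReal (m ^ ((1:ℝ)/2)) = M ^ ((1:ℝ)/2) := by
    rw [← ENNReal.ofReal_rpow_of_pos hm, ENNReal.ofReal_toReal hMt]
  have step3 : ∫⁻ t in Ioi (0:ℝ), min M (ENNReal.ofReal (t ^ (-2:ℝ)))
      ≤ 2 * M ^ ((1:ℝ)/2) := by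
    set T : ℝ := m ^ (-(1:ℝ)/2) with hT
    have hTpos : 0 < T := Real.rpow_pos_of_pos hm _
    rw [← Ioc_union_Ioi_eq_Ioi hTpos.le, lintegral_union measurableSet_Ioi Ioc_disjoint_Ioi_same]
    have h1 : ∫⁻ t in Ioc (0:ℝ) T, min M (ENNReal.ofReal (t ^ (-2:ℝ))) ≤ M ^ ((1:ℝ)/2) := by
      have hmm : m * m ^ (-(1:ℝ)/2) = m ^ ((1:ℝ)/2) := by
        nth_rewrite 1 [← Real.rpow_one m]
        rw [← Real.rpow_add hm]
        norm_num
      calc ∫⁻ t in Ioc (0:ℝ) T, min M (ENNReal.ofReal (t ^ (-2:ℝ)))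
          ≤ ∫⁻ _ in Ioc (0:ℝ) T, M := setLIntegral_mono measurable_const fun t _ => min_le_left _ _
        _ = M * volume (Ioc (0:ℝ) T) := setLIntegral_const _ _
        _ = M * ENNReal.ofReal T := by rw [Real.volume_Ioc, sub_zero]
        _ = ENNReal.ofReal m * ENNReal.ofReal (m ^ (-(1:ℝ)/2)) := by
            rw [ENNReal.ofReal_toReal hMt]
        _ = ENNReal.ofReal (m * m ^ (-(1:ℝ)/2)) := (ENNReal.ofReal_mul hm.le).symm
        _ = ENNReal.ofReal (m ^ ((1:ℝ)/2)) := by rw [hmm]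
        _ = M ^ ((1:ℝ)/2) := hMhalf
    have h2 : ∫⁻ t in Ioi T, min M (ENNReal.ofReal (t ^ (-2:ℝ))) ≤ M ^ ((1:ℝ)/2) := by
      have hint : IntegrableOn (fun t : ℝ => t ^ (-2:ℝ)) (Ioi T) volume :=
        integrableOn_Ioi_rpow_of_lt (by norm_num) hTpos
      have hnn : 0 ≤ᵐ[volume.restrict (Ioi T)] fun t : ℝ => t ^ (-2:ℝ) := by
        filter_upwards [ae_restrict_mem measurableSet_Ioi] with t ht
        exact Real.rpow_nonneg (le_of_lt (lt_trans hTpos ht)) _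
      have hval : ∫ t in Ioi T, t ^ (-2:ℝ) = T⁻¹ := by
        rw [integral_Ioi_rpow_of_lt (by norm_num) hTpos]
        norm_num
        rw [Real.rpow_neg_one]
      have hTinv : T⁻¹ = m ^ ((1:ℝ)/2) := by
        rw [hT]
        rw [show -(1:ℝ)/2 = -((1:ℝ)/2) by norm_num, Real.rpow_neg hm.le, inv_inv]
      calc ∫⁻ t in Ioi T, min M (ENNReal.ofReal (t ^ (-2:ℝ)))
          ≤ ∫⁻ t in Ioi T, ENNReal.ofReal (t ^ (-2:ℝ)) :=
            setLIntegral_mono (by fun_prop) fun t _ => min_le_right _ _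
        _ = ENNReal.ofReal (∫ t in Ioi T, t ^ (-2:ℝ)) :=
            (ofReal_integral_eq_lintegral_ofReal hint hnn).symm
        _ = ENNReal.ofReal (m ^ ((1:ℝ)/2)) := by rw [hval, hTinv]
        _ = M ^ ((1:ℝ)/2) := hMhalf
    calc _ ≤ M ^ ((1:ℝ)/2) + M ^ ((1:ℝ)/2) := add_le_add h1 h2
      _ = 2 * M ^ ((1:ℝ)/2) := (two_mul _).symm
  calc ∫⁻ x in ball 0 R, (F ‖x‖) ^ (-(1:ℝ)/2) ∂ν
      = ∫⁻ x in ball 0 R, ENNReal.ofReal (f x) ∂ν := step0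
    _ = ∫⁻ t in Ioi (0:ℝ), (ν.restrict (ball 0 R)) {a | t < f a} := step1
    _ ≤ ∫⁻ t in Ioi (0:ℝ), min M (ENNReal.ofReal (t ^ (-2:ℝ))) := step2
    _ ≤ 2 * M ^ ((1:ℝ)/2) := step3



lemma integrableOn_closedBall_of_memL2 (hfin : ∀ r : ℝ, ν (closedBall 0 r) ≠ ⊤)
    {g : EuclideanSpace ℝ (Fin d) → ℝ} (hg : MemLp g 2 ν) (r : ℝ) :
    IntegrableOn g (closedBall 0 r) ν := by
  haveI : IsFiniteMeasure (ν.restrict (closedBall (0 : EuclideanSpace ℝ (Fin d)) r)) := by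
    constructor
    rw [Measure.restrict_apply_univ]
    exact (hfin r).lt_top
  exact memLp_one_iff_integrable.mp
    ((hg.restrict _).mono_exponent (by norm_num : (1:ℝ≥0∞) ≤ 2))

lemma atom_bound (hfin : ∀ r : ℝ, ν (closedBall 0 r) ≠ ⊤)
    (hpos : ∀ r : ℝ, 0 < r → ν (closedBall 0 r) ≠ 0)
    (hzero : ν ({0} : Set (EuclideanSpace ℝ (Fin d))) = 0)
    {a : EuclideanSpace ℝ (Fin d) → ℝ} {R : ℝ} (hR : 0 < R) (ha : IsL2Atom ν a 0 R) :
    ∫⁻ x, ENNReal.ofReal |hardyOp ν a x| ∂ν ≤ 2 := by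
  obtain ⟨haL2, hsupp, hnorm, hmean⟩ := ha
  set M := ν (closedBall (0 : EuclideanSpace ℝ (Fin d)) R) with hMdef
  have hM0 : M ≠ 0 := hpos R hR
  have hMt : M ≠ ⊤ := hfin R
  have hm : 0 < M.toReal := ENNReal.toReal_pos hM0 hMt
  have hIntOn : ∀ r : ℝ, IntegrableOn a (closedBall 0 r) ν :=
    fun r => integrableOn_closedBall_of_memL2 hfin haL2 r
  -- hardyOp vanishes outside the ball of radius R
  have hvan : ∀ x : EuclideanSpace ℝ (Fin d), R ≤ ‖x‖ → hardyOp ν a x = 0 := by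
    intro x hx
    have hzero' : ∀ y : EuclideanSpace ℝ (Fin d), y ∉ closedBall (0:EuclideanSpace ℝ (Fin d)) R →
        a y = 0 := by
      intro y hy
      by_contra h
      exact hy (hsupp h)
    have h1 : ∫ y in closedBall (0:EuclideanSpace ℝ (Fin d)) ‖x‖, a y ∂ν = ∫ y, a y ∂ν := by
      apply setIntegral_eq_integral_of_forall_compl_eq_zero
      intro y hy
      apply hzero'
      intro hc
      exact hy (closedBall_subset_closedBall hx hc)
    have h2 : ∫ y in closedBall (0:EuclideanSpace ℝ (Fin d)) R, a y ∂ν = ∫ y, a y ∂ν :=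
      setIntegral_eq_integral_of_forall_compl_eq_zero hzero'
    rw [hardyOp, h1, ← h2, hmean, mul_zero]
  -- L² bound
  have hIsq : Integrable (fun x => |a x| ^ 2) ν :=
    haL2.integrable_sq.congr (Eventually.of_forall fun x => (sq_abs _).symm)
  have hsqle : ∫ x, |a x| ^ 2 ∂ν ≤ (M.toReal)⁻¹ := by
    have hI0 : 0 ≤ ∫ x, |a x| ^ 2 ∂ν := integral_nonneg fun x => sq_nonneg _
    have hEq : (M.toReal)⁻¹ ^ ((1:ℝ)/2) = M.toReal ^ (-(1:ℝ)/2) := by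
      rw [← Real.rpow_neg_one, ← Real.rpow_mul hm.le]
      norm_num
    by_contra hgt
    push_neg at hgt
    have hlt := Real.rpow_lt_rpow (inv_nonneg.mpr hm.le) hgt (by norm_num : (0:ℝ) < 1/2)
    rw [hEq] at hlt
    exact absurd hnorm (not_le.mpr hlt)
  have hlint2 : ∫⁻ x, (ENNReal.ofReal |a x|) ^ (2:ℝ) ∂ν ≤ M⁻¹ := by
    have heq : ∀ x, (ENNReal.ofReal |a x|) ^ (2:ℝ) = ENNReal.ofReal (|a x| ^ 2) := by
      intro x
      rw [show (2:ℝ) = ((2:ℕ):ℝ) by norm_num, ENNReal.rpow_natCast,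
        ENNReal.ofReal_pow (abs_nonneg _)]
    calc ∫⁻ x, (ENNReal.ofReal |a x|) ^ (2:ℝ) ∂ν
        = ∫⁻ x, ENNReal.ofReal (|a x| ^ 2) ∂ν := lintegral_congr fun x => heq x
      _ = ENNReal.ofReal (∫ x, |a x| ^ 2 ∂ν) :=
          (ofReal_integral_eq_lintegral_ofReal hIsq (Eventually.of_forall fun x => sq_nonneg _)).symm
      _ ≤ ENNReal.ofReal (M.toReal)⁻¹ := ENNReal.ofReal_le_ofReal hsqle
      _ = M⁻¹ := by rw [ENNReal.ofReal_inv_of_pos hm, ENNReal.ofReal_toReal hMt]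
  -- Cauchy–Schwarz
  have hCS : ∀ r : ℝ, ENNReal.ofReal |∫ y in closedBall (0:EuclideanSpace ℝ (Fin d)) r, a y ∂ν|
      ≤ (ν (closedBall 0 r)) ^ ((1:ℝ)/2) * M ^ (-(1:ℝ)/2) := by
    intro r
    have hint : IntegrableOn a (closedBall 0 r) ν := hIntOn r
    have h1 : |∫ y in closedBall (0:EuclideanSpace ℝ (Fin d)) r, a y ∂ν|
        ≤ ∫ y in closedBall (0:EuclideanSpace ℝ (Fin d)) r, |a y| ∂ν := by
      simpa [Real.norm_eq_abs] using
        norm_integral_le_integral_norm (μ := ν.restrict (closedBall 0 r)) a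
    have h2 : ENNReal.ofReal (∫ y in closedBall (0:EuclideanSpace ℝ (Fin d)) r, |a y| ∂ν)
        = ∫⁻ y in closedBall (0:EuclideanSpace ℝ (Fin d)) r, ENNReal.ofReal |a y| ∂ν :=
      ofReal_integral_eq_lintegral_ofReal hint.abs (Eventually.of_forall fun y => abs_nonneg _)
    have hgmeas : AEMeasurable (fun y => ENNReal.ofReal |a y|)
        (ν.restrict (closedBall (0:EuclideanSpace ℝ (Fin d)) r)) :=
      (ENNReal.measurable_ofReal.comp_aemeasurable
        (continuous_abs.measurable.comp_aemeasurable
          haL2.aestronglyMeasurable.aemeasurable)).restrict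
    have hH := ENNReal.lintegral_mul_le_Lp_mul_Lq
      (ν.restrict (closedBall (0:EuclideanSpace ℝ (Fin d)) r))
      Real.HolderConjugate.two_two
      (aemeasurable_const (b := (1:ℝ≥0∞))) hgmeas
    simp only [Pi.mul_apply, one_mul, ENNReal.one_rpow, lintegral_const,
      Measure.restrict_apply_univ] at hH
    -- hH : ∫⁻ ofReal|a| ∂restr ≤ (ν (cB r) )^(1/2) * (∫⁻ (ofReal|a|)^2 ∂restr)^(1/2)
    have h3 : (∫⁻ y in closedBall (0:EuclideanSpace ℝ (Fin d)) r,
        (ENNReal.ofReal |a y|) ^ (2:ℝ) ∂ν) ^ ((1:ℝ)/2) ≤ (M⁻¹) ^ ((1:ℝ)/2) := by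
      apply ENNReal.rpow_le_rpow _ (by norm_num : (0:ℝ) ≤ 1/2)
      exact le_trans (lintegral_mono' Measure.restrict_le_self le_rfl) hlint2
    have h4 : (M⁻¹) ^ ((1:ℝ)/2) = M ^ (-(1:ℝ)/2) := by
      rw [ENNReal.inv_rpow, show -(1:ℝ)/2 = -((1:ℝ)/2) by norm_num, ENNReal.rpow_neg]
    calc ENNReal.ofReal |∫ y in closedBall (0:EuclideanSpace ℝ (Fin d)) r, a y ∂ν|
        ≤ ENNReal.ofReal (∫ y in closedBall (0:EuclideanSpace ℝ (Fin d)) r, |a y| ∂ν) :=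
          ENNReal.ofReal_le_ofReal h1
      _ = ∫⁻ y in closedBall (0:EuclideanSpace ℝ (Fin d)) r, ENNReal.ofReal |a y| ∂ν := h2
      _ ≤ (ν (closedBall 0 r)) ^ ((1:ℝ)/2) *
          (∫⁻ y in closedBall (0:EuclideanSpace ℝ (Fin d)) r,
            (ENNReal.ofReal |a y|) ^ (2:ℝ) ∂ν) ^ ((1:ℝ)/2) := hH
      _ ≤ (ν (closedBall 0 r)) ^ ((1:ℝ)/2) * M ^ (-(1:ℝ)/2) := by
          rw [← h4]
          exact mul_le_mul_right h3 _
  -- pointwise bound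
  have hpt : ∀ x : EuclideanSpace ℝ (Fin d), ENNReal.ofReal |hardyOp ν a x| ≤
      (ball (0:EuclideanSpace ℝ (Fin d)) R).indicator
        (fun x => (ν (closedBall 0 ‖x‖)) ^ (-(1:ℝ)/2) * M ^ (-(1:ℝ)/2)) x := by
    intro x
    rcases le_or_gt R ‖x‖ with h | h
    · rw [hvan x h]
      simp
    · have hxball : x ∈ ball (0:EuclideanSpace ℝ (Fin d)) R := mem_ball_zero_iff.mpr h
      rw [indicator_of_mem hxball]
      set Fx := ν (closedBall (0:EuclideanSpace ℝ (Fin d)) ‖x‖) with hFx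
      have hinvle : ENNReal.ofReal (Fx.toReal⁻¹) ≤ Fx⁻¹ := by
        by_cases hF0 : Fx = 0
        · rw [hF0]
          simp
        · rw [ENNReal.ofReal_inv_of_pos (ENNReal.toReal_pos hF0 (hfin _)),
            ENNReal.ofReal_toReal (hfin _)]
      calc ENNReal.ofReal |hardyOp ν a x|
          = ENNReal.ofReal (Fx.toReal⁻¹ *
              |∫ y in closedBall (0:EuclideanSpace ℝ (Fin d)) ‖x‖, a y ∂ν|) := by
            rw [hardyOp, abs_mul, abs_of_nonneg (inv_nonneg.mpr ENNReal.toReal_nonneg)]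
        _ = ENNReal.ofReal (Fx.toReal⁻¹) *
            ENNReal.ofReal |∫ y in closedBall (0:EuclideanSpace ℝ (Fin d)) ‖x‖, a y ∂ν| :=
            ENNReal.ofReal_mul (inv_nonneg.mpr ENNReal.toReal_nonneg)
        _ ≤ Fx⁻¹ * (Fx ^ ((1:ℝ)/2) * M ^ (-(1:ℝ)/2)) :=
            mul_le_mul hinvle (hCS ‖x‖) zero_le zero_le
        _ ≤ Fx ^ (-(1:ℝ)/2) * M ^ (-(1:ℝ)/2) := by
            rw [← mul_assoc]
            apply mul_le_mul_left
            by_cases hF0 : Fx = 0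
            · rw [hF0]
              rw [ENNReal.zero_rpow_of_pos (by norm_num : (0:ℝ) < 1/2)]
              simp
            · have hFt : Fx ≠ ⊤ := hfin _
              rw [← ENNReal.rpow_neg_one Fx, ← ENNReal.rpow_add _ _ hF0 hFt]
              norm_num
  have hmeasF : Measurable fun x : EuclideanSpace ℝ (Fin d) =>
      (ν (closedBall 0 ‖x‖)) ^ (-(1:ℝ)/2) := by
    have hFmono : Monotone fun r : ℝ => ν (closedBall 0 r) :=
      fun r r' h => measure_mono (closedBall_subset_closedBall h)
    have h1 : Measurable fun x : EuclideanSpace ℝ (Fin d) => ν (closedBall 0 ‖x‖) :=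
      hFmono.measurable.comp measurable_norm
    exact h1.pow_const _
  calc ∫⁻ x, ENNReal.ofReal |hardyOp ν a x| ∂ν
      ≤ ∫⁻ x, (ball (0:EuclideanSpace ℝ (Fin d)) R).indicator
          (fun x => (ν (closedBall 0 ‖x‖)) ^ (-(1:ℝ)/2) * M ^ (-(1:ℝ)/2)) x ∂ν :=
        lintegral_mono hpt
    _ = ∫⁻ x in ball (0:EuclideanSpace ℝ (Fin d)) R,
          (ν (closedBall 0 ‖x‖)) ^ (-(1:ℝ)/2) * M ^ (-(1:ℝ)/2) ∂ν :=
        lintegral_indicator measurableSet_ball _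
    _ = (∫⁻ x in ball (0:EuclideanSpace ℝ (Fin d)) R,
          (ν (closedBall 0 ‖x‖)) ^ (-(1:ℝ)/2) ∂ν) * M ^ (-(1:ℝ)/2) :=
        lintegral_mul_const _ hmeasF
    _ ≤ (2 * M ^ ((1:ℝ)/2)) * M ^ (-(1:ℝ)/2) :=
        mul_le_mul_left (key_lintegral hfin hpos hzero hR) _
    _ = 2 := by
        rw [mul_assoc, ← ENNReal.rpow_add _ _ hM0 hMt]
        norm_num



lemma measurable_hardyOp {g : EuclideanSpace ℝ (Fin d) → ℝ}
    (hg : ∀ r : ℝ, IntegrableOn g (closedBall 0 r) ν) :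
    Measurable (hardyOp ν g) := by
  have hFmono : Monotone fun r : ℝ => ν (closedBall 0 r) :=
    fun r r' h => measure_mono (closedBall_subset_closedBall h)
  have hc : Measurable fun x : EuclideanSpace ℝ (Fin d) => (ν (closedBall 0 ‖x‖)).toReal⁻¹ :=
    (ENNReal.measurable_toReal.comp (hFmono.measurable.comp measurable_norm)).inv
  have hGp : Monotone fun r : ℝ =>
      ∫ y in closedBall (0:EuclideanSpace ℝ (Fin d)) r, g y ⊔ 0 ∂ν := by
    intro r r' h
    apply setIntegral_mono_set (hg r').pos_part
      (Eventually.of_forall fun y => le_sup_right)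
      (HasSubset.Subset.eventuallyLE (closedBall_subset_closedBall h))
  have hGn : Monotone fun r : ℝ =>
      ∫ y in closedBall (0:EuclideanSpace ℝ (Fin d)) r, (-g y) ⊔ 0 ∂ν := by
    intro r r' h
    apply setIntegral_mono_set (hg r').neg.pos_part
      (Eventually.of_forall fun y => le_sup_right)
      (HasSubset.Subset.eventuallyLE (closedBall_subset_closedBall h))
  have hsub : ∀ r : ℝ, ∫ y in closedBall (0:EuclideanSpace ℝ (Fin d)) r, g y ∂ν =
      (∫ y in closedBall (0:EuclideanSpace ℝ (Fin d)) r, g y ⊔ 0 ∂ν) -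
      (∫ y in closedBall (0:EuclideanSpace ℝ (Fin d)) r, (-g y) ⊔ 0 ∂ν) := by
    intro r
    have hip : Integrable (fun y => g y ⊔ 0) (ν.restrict (closedBall 0 r)) := (hg r).pos_part
    have hin : Integrable (fun y => (-g y) ⊔ 0) (ν.restrict (closedBall 0 r)) := (hg r).neg.pos_part
    rw [← integral_sub hip hin]
    apply integral_congr_ae
    apply Eventually.of_forall
    intro y
    rcases le_total (g y) 0 with h | h
    · simp [max_eq_right h, max_eq_left (neg_nonneg.mpr h)]
    · simp [max_eq_left h, max_eq_right (neg_nonpos.mpr h)]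
  have heq : hardyOp ν g = fun x => (ν (closedBall 0 ‖x‖)).toReal⁻¹ *
      ((∫ y in closedBall (0:EuclideanSpace ℝ (Fin d)) ‖x‖, g y ⊔ 0 ∂ν) -
       (∫ y in closedBall (0:EuclideanSpace ℝ (Fin d)) ‖x‖, (-g y) ⊔ 0 ∂ν)) := by
    funext x
    rw [hardyOp, hsub]
  rw [heq]
  exact hc.mul ((hGp.measurable.comp measurable_norm).sub (hGn.measurable.comp measurable_norm))

lemma integrable_of_memL2_support (hfin : ∀ r : ℝ, ν (closedBall 0 r) ≠ ⊤)
    {g : EuclideanSpace ℝ (Fin d) → ℝ} {R : ℝ} (hg : MemLp g 2 ν)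
    (hsupp : Function.support g ⊆ closedBall 0 R) : Integrable g ν := by
  have h1 : IntegrableOn g (closedBall 0 R) ν := by
    haveI : IsFiniteMeasure (ν.restrict (closedBall (0 : EuclideanSpace ℝ (Fin d)) R)) := by
      constructor
      rw [Measure.restrict_apply_univ]
      exact (hfin R).lt_top
    exact memLp_one_iff_integrable.mp
      ((hg.restrict _).mono_exponent (by norm_num : (1:ℝ≥0∞) ≤ 2))
  have h2 := h1.integrable_indicator measurableSet_closedBall
  rwa [indicator_eq_self.mpr hsupp] at h2


end HardyAux

/-- For every `f ∈ H¹_k(ℝ^d)`, `‖H_k f‖_{L¹(ν_k)} ≤ 2 ‖f‖_{H¹_k}`. -/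
theorem eLpNorm_one_hardyOp_le_H1norm {d : ℕ} (hd : 0 < d)
    (Rp : Finset (EuclideanSpace ℝ (Fin d))) (hRp : ∀ ξ ∈ Rp, ξ ≠ 0)
    (k : EuclideanSpace ℝ (Fin d) → ℝ) (hk : ∀ ξ ∈ Rp, 0 ≤ k ξ)
    (f : EuclideanSpace ℝ (Fin d) → ℝ) (hf : MemH1O (dunklMeasure Rp k) f) :
    eLpNorm (hardyOp (dunklMeasure Rp k) f) 1 (dunklMeasure Rp k)
      ≤ ENNReal.ofReal (2 * H1normO (dunklMeasure Rp k) f) := by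
  classical
  set ν := dunklMeasure Rp k with hν
  have hfin : ∀ r : ℝ, ν (closedBall 0 r) ≠ ⊤ :=
    fun r => HardyAux.dunklMeasure_closedBall_ne_top Rp k hk 0 r
  have hposm : ∀ r : ℝ, 0 < r → ν (closedBall 0 r) ≠ 0 :=
    fun r hr => HardyAux.dunklMeasure_closedBall_pos hd Rp hRp k hk hr
  have hzero : ν ({0} : Set (EuclideanSpace ℝ (Fin d))) = 0 :=
    HardyAux.dunklMeasure_singleton_zero hd Rp k
  obtain ⟨hf1, hf2, lam₀, a₀, hdec₀⟩ := hf
  have hfint : Integrable f ν := memLp_one_iff_integrable.mp hf1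
  have key : ∀ lam a, IsAtomicDecompO ν f lam a →
      ∫⁻ x, ENNReal.ofReal |hardyOp ν f x| ∂ν ≤ ENNReal.ofReal (2 * ∑' j, |lam j|) := by
    intro lam a hdec
    obtain ⟨hatom, hsum, hL1, _hL2c⟩ := hdec
    choose Rj hRj hatomj using hatom
    have haL2 : ∀ j, MemLp (a j) 2 ν := fun j => (hatomj j).1
    have hint_a : ∀ j, Integrable (a j) ν := fun j =>
      HardyAux.integrable_of_memL2_support hfin (haL2 j) (hatomj j).2.1
    set fN : ℕ → EuclideanSpace ℝ (Fin d) → ℝ :=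
      fun N x => ∑ j ∈ Finset.range N, lam j * a j x with hfNdef
    have hint_fN : ∀ N, Integrable (fN N) ν := by
      intro N
      have : Integrable (fun x => ∑ j ∈ Finset.range N, lam j * a j x) ν :=
        integrable_finset_sum _ (fun j _ => (hint_a j).const_mul _)
      exact this
    have hHlin : ∀ N x, hardyOp ν (fN N) x =
        ∑ j ∈ Finset.range N, lam j * hardyOp ν (a j) x := by
      intro N x
      have h1 : ∀ j ∈ Finset.range N, Integrable (fun y => lam j * a j y)
          (ν.restrict (closedBall (0:EuclideanSpace ℝ (Fin d)) ‖x‖)) :=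
        fun j _ => ((hint_a j).const_mul _).integrableOn
      rw [hardyOp]
      show (ν (closedBall 0 ‖x‖)).toReal⁻¹ *
          ∫ y in closedBall (0:EuclideanSpace ℝ (Fin d)) ‖x‖,
            ∑ j ∈ Finset.range N, lam j * a j y ∂ν = _
      rw [integral_finset_sum _ h1, Finset.mul_sum]
      apply Finset.sum_congr rfl
      intro j _
      rw [integral_const_mul, hardyOp]
      ring
    have hmeasHa : ∀ j, Measurable (hardyOp ν (a j)) := fun j =>
      HardyAux.measurable_hardyOp (fun r => (hint_a j).integrableOn)
    have hmeasHa' : ∀ j, Measurable fun x => ENNReal.ofReal |hardyOp ν (a j) x| := by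
      intro j
      exact ENNReal.measurable_ofReal.comp (continuous_abs.measurable.comp (hmeasHa j))
    have hmeasHN : ∀ N, Measurable fun x => ENNReal.ofReal |hardyOp ν (fN N) x| := by
      intro N
      have h := HardyAux.measurable_hardyOp (ν := ν) (g := fN N)
        (fun r => (hint_fN N).integrableOn)
      exact ENNReal.measurable_ofReal.comp (continuous_abs.measurable.comp h)
    have hconst : ∀ N, ∫⁻ x, ENNReal.ofReal |hardyOp ν (fN N) x| ∂ν
        ≤ ENNReal.ofReal (2 * ∑' j, |lam j|) := by
      intro N
      have hptw : ∀ x, ENNReal.ofReal |hardyOp ν (fN N) x| ≤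
          ∑ j ∈ Finset.range N, ENNReal.ofReal |lam j| * ENNReal.ofReal |hardyOp ν (a j) x| := by
        intro x
        rw [hHlin N x]
        calc ENNReal.ofReal |∑ j ∈ Finset.range N, lam j * hardyOp ν (a j) x|
            ≤ ENNReal.ofReal (∑ j ∈ Finset.range N, |lam j * hardyOp ν (a j) x|) :=
              ENNReal.ofReal_le_ofReal (Finset.abs_sum_le_sum_abs _ _)
          _ = ∑ j ∈ Finset.range N, ENNReal.ofReal |lam j * hardyOp ν (a j) x| :=
              ENNReal.ofReal_sum_of_nonneg (fun j _ => abs_nonneg _)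
          _ = ∑ j ∈ Finset.range N, ENNReal.ofReal |lam j| *
              ENNReal.ofReal |hardyOp ν (a j) x| := by
              apply Finset.sum_congr rfl
              intro j _
              rw [abs_mul, ENNReal.ofReal_mul (abs_nonneg _)]
      have hmeasj : ∀ j, Measurable fun x =>
          ENNReal.ofReal |lam j| * ENNReal.ofReal |hardyOp ν (a j) x| := fun j =>
        measurable_const.mul (hmeasHa' j)
      calc ∫⁻ x, ENNReal.ofReal |hardyOp ν (fN N) x| ∂ν
          ≤ ∫⁻ x, ∑ j ∈ Finset.range N, ENNReal.ofReal |lam j| *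
              ENNReal.ofReal |hardyOp ν (a j) x| ∂ν := lintegral_mono hptw
        _ = ∑ j ∈ Finset.range N, ∫⁻ x, ENNReal.ofReal |lam j| *
              ENNReal.ofReal |hardyOp ν (a j) x| ∂ν :=
            lintegral_finset_sum _ (fun j _ => hmeasj j)
        _ = ∑ j ∈ Finset.range N, ENNReal.ofReal |lam j| *
              ∫⁻ x, ENNReal.ofReal |hardyOp ν (a j) x| ∂ν := by
            apply Finset.sum_congr rfl
            intro j _
            rw [lintegral_const_mul _ (hmeasHa' j)]
        _ ≤ ∑ j ∈ Finset.range N, ENNReal.ofReal |lam j| * 2 :=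
            Finset.sum_le_sum (fun j _ =>
              mul_le_mul_right (HardyAux.atom_bound hfin hposm hzero (hRj j) (hatomj j)) _)
        _ = 2 * ∑ j ∈ Finset.range N, ENNReal.ofReal |lam j| := by
            rw [← Finset.sum_mul, mul_comm]
        _ ≤ 2 * ∑' j, ENNReal.ofReal |lam j| := mul_le_mul_right (ENNReal.sum_le_tsum _) _
        _ = ENNReal.ofReal (2 * ∑' j, |lam j|) := by
            rw [ENNReal.ofReal_mul (by norm_num : (0:ℝ) ≤ 2),
              ENNReal.ofReal_tsum_of_nonneg (fun j => abs_nonneg _) hsum]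
            norm_num
    have hae0 : ∀ᵐ x ∂ν, x ≠ (0:EuclideanSpace ℝ (Fin d)) := by
      rw [ae_iff]
      convert hzero using 2
      ext x
      simp
    have hL1' : Tendsto (fun N => (eLpNorm (fun x => f x - fN N x) 1 ν).toReal) atTop (𝓝 0) := by
      have h := (ENNReal.tendsto_toReal (by simp : (0:ℝ≥0∞) ≠ ⊤)).comp hL1
      simpa [hfNdef, Function.comp_def] using h
    have hconv : ∀ᵐ x ∂ν, Tendsto (fun N => ENNReal.ofReal |hardyOp ν (fN N) x|) atTop
        (𝓝 (ENNReal.ofReal |hardyOp ν f x|)) := by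
      filter_upwards [hae0] with x hx
      have htend : Tendsto (fun N => hardyOp ν (fN N) x) atTop (𝓝 (hardyOp ν f x)) := by
        rw [tendsto_iff_norm_sub_tendsto_zero]
        have hbnd : ∀ N, ‖hardyOp ν (fN N) x - hardyOp ν f x‖ ≤
            (ν (closedBall 0 ‖x‖)).toReal⁻¹ *
              (eLpNorm (fun y => f y - fN N y) 1 ν).toReal := by
          intro N
          have hdiffint : Integrable (fun y => fN N y - f y) ν := (hint_fN N).sub hfint
          have hsubeq : hardyOp ν (fN N) x - hardyOp ν f x =
              (ν (closedBall 0 ‖x‖)).toReal⁻¹ *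
                ∫ y in closedBall (0:EuclideanSpace ℝ (Fin d)) ‖x‖, (fN N y - f y) ∂ν := by
            rw [hardyOp, hardyOp, ← mul_sub,
              ← integral_sub (hint_fN N).integrableOn hfint.integrableOn]
          rw [hsubeq, norm_mul, Real.norm_eq_abs, Real.norm_eq_abs,
            abs_of_nonneg (inv_nonneg.mpr ENNReal.toReal_nonneg)]
          apply mul_le_mul_of_nonneg_left ?_ (inv_nonneg.mpr ENNReal.toReal_nonneg)
          have h1 : |∫ y in closedBall (0:EuclideanSpace ℝ (Fin d)) ‖x‖, (fN N y - f y) ∂ν|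
              ≤ ∫ y in closedBall (0:EuclideanSpace ℝ (Fin d)) ‖x‖, |fN N y - f y| ∂ν := by
            simpa [Real.norm_eq_abs] using
              norm_integral_le_integral_norm (μ := ν.restrict (closedBall 0 ‖x‖))
                (fun y => fN N y - f y)
          have h2 : ∫ y in closedBall (0:EuclideanSpace ℝ (Fin d)) ‖x‖, |fN N y - f y| ∂ν
              ≤ ∫ y, |fN N y - f y| ∂ν :=
            setIntegral_le_integral hdiffint.abs (Eventually.of_forall fun y => abs_nonneg _)
          have h3 : ∫ y, |fN N y - f y| ∂ν = (eLpNorm (fun y => f y - fN N y) 1 ν).toReal := by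
            rw [eLpNorm_one_eq_lintegral_enorm]
            have hsw : (∫⁻ y, ‖f y - fN N y‖ₑ ∂ν)
                = ∫⁻ y, ‖fN N y - f y‖ₑ ∂ν :=
              lintegral_congr fun y => by rw [← neg_sub (fN N y) (f y), enorm_neg]
            rw [hsw, ← integral_norm_eq_lintegral_enorm hdiffint.aestronglyMeasurable]
            simp [Real.norm_eq_abs]
          calc |∫ y in closedBall (0:EuclideanSpace ℝ (Fin d)) ‖x‖, (fN N y - f y) ∂ν|
              ≤ ∫ y in closedBall (0:EuclideanSpace ℝ (Fin d)) ‖x‖, |fN N y - f y| ∂ν := h1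
            _ ≤ ∫ y, |fN N y - f y| ∂ν := h2
            _ = (eLpNorm (fun y => f y - fN N y) 1 ν).toReal := h3
        apply squeeze_zero (fun N => norm_nonneg _) hbnd
        have := hL1'.const_mul ((ν (closedBall 0 ‖x‖)).toReal⁻¹)
        simpa using this
      exact ((ENNReal.continuous_ofReal.comp continuous_abs).tendsto _).comp htend
    have hliminf : ∫⁻ x, ENNReal.ofReal |hardyOp ν f x| ∂ν
        ≤ liminf (fun N => ∫⁻ x, ENNReal.ofReal |hardyOp ν (fN N) x| ∂ν) atTop := by
      have heq : ∫⁻ x, ENNReal.ofReal |hardyOp ν f x| ∂ν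
          = ∫⁻ x, liminf (fun N => ENNReal.ofReal |hardyOp ν (fN N) x|) atTop ∂ν := by
        apply lintegral_congr_ae
        filter_upwards [hconv] with x hx
        exact hx.liminf_eq.symm
      rw [heq]
      exact lintegral_liminf_le hmeasHN
    refine le_trans hliminf ?_
    exact Filter.liminf_le_of_frequently_le (Frequently.of_forall hconst)
  have hnonempty : {s : ℝ | ∃ lam a, IsAtomicDecompO ν f lam a ∧ s = ∑' j, |lam j|}.Nonempty :=
    ⟨_, lam₀, a₀, hdec₀, rfl⟩
  have help : eLpNorm (hardyOp ν f) 1 ν = ∫⁻ x, ENNReal.ofReal |hardyOp ν f x| ∂ν := by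
    rw [eLpNorm_one_eq_lintegral_enorm]
    apply lintegral_congr
    intro x
    rw [← ofReal_norm, Real.norm_eq_abs]
  rw [help, H1normO]
  apply ENNReal.le_of_forall_pos_le_add
  intro ε hε _
  obtain ⟨s, hs_mem, hs_lt⟩ := Real.lt_sInf_add_pos hnonempty
    (by positivity : 0 < (ε:ℝ)/2)
  obtain ⟨lam, a, hdec, rfl⟩ := hs_mem
  calc ∫⁻ x, ENNReal.ofReal |hardyOp ν f x| ∂ν
      ≤ ENNReal.ofReal (2 * ∑' j, |lam j|) := key lam a hdec
    _ ≤ ENNReal.ofReal (2 * sInf {s : ℝ | ∃ lam a, IsAtomicDecompO ν f lam a ∧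
          s = ∑' j, |lam j|} + (ε:ℝ)) := by
        apply ENNReal.ofReal_le_ofReal
        nlinarith [hs_lt]
    _ ≤ ENNReal.ofReal (2 * sInf {s : ℝ | ∃ lam a, IsAtomicDecompO ν f lam a ∧
          s = ∑' j, |lam j|}) + ENNReal.ofReal (ε:ℝ) := ENNReal.ofReal_add_le
    _ ≤ ENNReal.ofReal (2 * sInf {s : ℝ | ∃ lam a, IsAtomicDecompO ν f lam a ∧
          s = ∑' j, |lam j|}) + (ε : ℝ≥0∞) := by
        apply add_le_add_right
        rw [ENNReal.ofReal_coe_nnreal]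
end
end

section
/- (Doubling property) There exists a constant $c > 0$ such that for every $x \in \mathbb{R}^d$ and every $r > 0$, $\nu_k(B(x,2r)) \leq c\, \nu_k(B(x,r))$; i.e., $(\mathbb{R}^d, \nu_k)$ is a space of homogeneous type. -/
open MeasureTheory Metric Filter Topology Set
open scoped ENNReal NNReal

noncomputable section

lemma euclid_coord_abs_le_norm {d : ℕ} (z : EuclideanSpace ℝ (Fin d)) (i : Fin d) :
    |z i| ≤ ‖z‖ := by
  have h1 : (inner ℝ (EuclideanSpace.single i (1 : ℝ)) z : ℝ) = z i := by
    simp [EuclideanSpace.inner_single_left]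
  calc |z i| = |(inner ℝ (EuclideanSpace.single i (1 : ℝ)) z : ℝ)| := by rw [h1]
    _ ≤ ‖EuclideanSpace.single i (1 : ℝ)‖ * ‖z‖ := abs_real_inner_le_norm _ _
    _ = ‖z‖ := by rw [EuclideanSpace.norm_single]; simp

/-- Volume of a slab intersected with a ball. -/
lemma slab_vol {d : ℕ} (hd : 0 < d) (u : EuclideanSpace ℝ (Fin d)) (hu : ‖u‖ = 1)
    (x : EuclideanSpace ℝ (Fin d)) (r δ : ℝ) :
    volume {y : EuclideanSpace ℝ (Fin d) | y ∈ closedBall x r ∧ |(inner ℝ u y : ℝ)| ≤ δ}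
      ≤ ENNReal.ofReal (2 * δ) * ENNReal.ofReal (2 * r) ^ (d - 1) := by
  classical
  set i0 : Fin d := ⟨0, hd⟩ with hi0
  have hortho : Orthonormal ℝ (Set.restrict {i0} (fun _ : Fin d => u)) := by
    refine ⟨fun i => hu, fun i j hij => ?_⟩
    exact absurd (Subsingleton.elim i j) hij
  obtain ⟨b, hb⟩ := hortho.exists_orthonormalBasis_extension_of_card_eq (by simp)
  have hbu : b i0 = u := hb i0 rfl
  set I : Fin d → Set ℝ := fun i =>
    if i = i0 then Icc (-δ) δ else Icc (b.repr x i - r) (b.repr x i + r) with hI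
  have hmp : MeasurePreserving
      (fun y : EuclideanSpace ℝ (Fin d) => (MeasurableEquiv.toLp 2 (Fin d → ℝ)).symm (b.repr y))
      volume volume :=
    (EuclideanSpace.volume_preserving_symm_measurableEquiv_toLp (Fin d)).comp b.measurePreserving_repr
  have hsub : {y : EuclideanSpace ℝ (Fin d) | y ∈ closedBall x r ∧ |(inner ℝ u y : ℝ)| ≤ δ}
      ⊆ (fun y : EuclideanSpace ℝ (Fin d) => (MeasurableEquiv.toLp 2 (Fin d → ℝ)).symm (b.repr y))
        ⁻¹' (Set.pi Set.univ I) := by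
    rintro y ⟨hy1, hy2⟩
    intro i _
    show (b.repr y) i ∈ I i
    by_cases hi : i = i0
    · subst hi
      have hrepr : b.repr y i0 = (inner ℝ u y : ℝ) := by
        rw [OrthonormalBasis.repr_apply_apply, hbu]
      simp only [hI, if_pos rfl, Set.mem_Icc, hrepr]
      have h2 := abs_le.mp hy2
      exact ⟨h2.1, h2.2⟩
    · have h3 : b.repr y i - b.repr x i = b.repr (y - x) i := by
        rw [map_sub]; rfl
      have h4 : |b.repr y i - b.repr x i| ≤ r := by
        rw [h3]
        calc |b.repr (y - x) i| ≤ ‖b.repr (y - x)‖ := euclid_coord_abs_le_norm _ _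
          _ = ‖y - x‖ := b.repr.norm_map _
          _ ≤ r := by rwa [mem_closedBall, dist_eq_norm] at hy1
      have h5 := abs_le.mp h4
      simp only [hI, if_neg hi, Set.mem_Icc]
      constructor <;> linarith [h5.1, h5.2]
  have hmeas : MeasurableSet (Set.pi Set.univ I) :=
    MeasurableSet.univ_pi fun i => by
      by_cases hi : i = i0 <;> simp [hI, hi, measurableSet_Icc]
  calc volume {y : EuclideanSpace ℝ (Fin d) | y ∈ closedBall x r ∧ |(inner ℝ u y : ℝ)| ≤ δ}
      ≤ volume ((fun y : EuclideanSpace ℝ (Fin d) =>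
          (MeasurableEquiv.toLp 2 (Fin d → ℝ)).symm (b.repr y)) ⁻¹' (Set.pi Set.univ I)) :=
        measure_mono hsub
    _ = volume (Set.pi Set.univ I) := hmp.measure_preimage hmeas.nullMeasurableSet
    _ = ∏ i, volume (I i) := volume_pi_pi I
    _ = ENNReal.ofReal (2 * δ) * ENNReal.ofReal (2 * r) ^ (d - 1) := by
        rw [Fintype.prod_eq_mul_prod_compl i0 (fun i => volume (I i))]
        have hterm : ∀ i ∈ ({i0}ᶜ : Finset (Fin d)),
            (volume (I i) : ℝ≥0∞) = ENNReal.ofReal (2 * r) := by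
          intro i hi
          have hi' : i ≠ i0 := by simpa using hi
          simp only [hI, if_neg hi', Real.volume_Icc]
          congr 1; ring
        rw [Finset.prod_congr rfl hterm, Finset.prod_const]
        have hcard : ({i0}ᶜ : Finset (Fin d)).card = d - 1 := by
          simp [Finset.card_compl]
        rw [hcard]
        congr 1
        simp only [hI, if_pos rfl, Real.volume_Icc]
        congr 1; ring

/-- Lower bound on the Dunkl measure of a ball. -/
lemma dunkl_lower {d : ℕ} (hd : 0 < d) (Rp : Finset (EuclideanSpace ℝ (Fin d)))
    (hRp : ∀ ξ ∈ Rp, ξ ≠ 0) (k : EuclideanSpace ℝ (Fin d) → ℝ) (hk : ∀ ξ ∈ Rp, 0 ≤ k ξ) :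
    ∃ ε : ℝ, 0 < ε ∧ ∀ (x : EuclideanSpace ℝ (Fin d)) (r : ℝ), 0 < r →
      ENNReal.ofReal ((∏ ξ ∈ Rp, (ε * (|(inner ℝ ξ x : ℝ)| + r * ‖ξ‖)) ^ (2 * k ξ)) *
        (r ^ d * (volume (ball (0 : EuclideanSpace ℝ (Fin d)) 1)).toReal / 2))
        ≤ dunklMeasure Rp k (closedBall x r) := by
  classical
  set Vr := (volume (ball (0 : EuclideanSpace ℝ (Fin d)) 1)).toReal with hVr
  have hV0 : 0 < volume (ball (0 : EuclideanSpace ℝ (Fin d)) 1) := measure_ball_pos _ _ one_pos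
  have hVtop : volume (ball (0 : EuclideanSpace ℝ (Fin d)) 1) ≠ ⊤ := measure_ball_lt_top.ne
  have hVrpos : 0 < Vr := ENNReal.toReal_pos hV0.ne' hVtop
  set N := Rp.card with hN
  set ε : ℝ := min (1 / 4) (Vr / (6 * 2 ^ d * (N + 1))) with hε
  have hden : (0 : ℝ) < 6 * 2 ^ d * (N + 1) :=
    mul_pos (by positivity) (Nat.cast_add_one_pos N)
  have hεpos : 0 < ε := lt_min (by norm_num) (div_pos hVrpos hden)
  have hεle : ε ≤ 1 / 4 := min_le_left _ _
  have hεle' : ε ≤ Vr / (6 * 2 ^ d * (N + 1)) := min_le_right _ _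
  refine ⟨ε, hεpos, ?_⟩
  intro x r hr
  have hMnn : ∀ ξ : EuclideanSpace ℝ (Fin d), 0 ≤ |(inner ℝ ξ x : ℝ)| + r * ‖ξ‖ :=
    fun ξ => add_nonneg (abs_nonneg _) (mul_nonneg hr.le (norm_nonneg _))
  set M : EuclideanSpace ℝ (Fin d) → ℝ := fun ξ => |(inner ℝ ξ x : ℝ)| + r * ‖ξ‖ with hM
  set bad : EuclideanSpace ℝ (Fin d) → Set (EuclideanSpace ℝ (Fin d)) := fun ξ =>
    {y | y ∈ closedBall x r ∧ |(inner ℝ ξ y : ℝ)| ≤ ε * M ξ} with hbad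
  -- volume bound for each bad set
  have hbadvol : ∀ ξ ∈ Rp, volume (bad ξ) ≤ ENNReal.ofReal (3 * ε * 2 ^ d * r ^ d) := by
    intro ξ hξ
    have hξ0 : (0 : ℝ) < ‖ξ‖ := norm_pos_iff.mpr (hRp ξ hξ)
    have hinner_bound : ∀ y ∈ closedBall x r,
        |(inner ℝ ξ x : ℝ)| - r * ‖ξ‖ ≤ |(inner ℝ ξ y : ℝ)| := by
      intro y hy
      have h1 : (inner ℝ ξ x : ℝ) = (inner ℝ ξ y : ℝ) + (inner ℝ ξ (x - y) : ℝ) := by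
        rw [inner_sub_right]; ring
      have h2 : |(inner ℝ ξ (x - y) : ℝ)| ≤ ‖ξ‖ * r := by
        refine (abs_real_inner_le_norm _ _).trans ?_
        have hxy : ‖x - y‖ ≤ r := by
          rw [mem_closedBall, dist_eq_norm] at hy
          rwa [norm_sub_rev]
        exact mul_le_mul_of_nonneg_left hxy (norm_nonneg _)
      have h3 : |(inner ℝ ξ x : ℝ)| ≤ |(inner ℝ ξ y : ℝ)| + ‖ξ‖ * r := by
        calc |(inner ℝ ξ x : ℝ)| = |(inner ℝ ξ y : ℝ) + (inner ℝ ξ (x - y) : ℝ)| := by rw [← h1]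
          _ ≤ |(inner ℝ ξ y : ℝ)| + |(inner ℝ ξ (x - y) : ℝ)| := abs_add_le _ _
          _ ≤ |(inner ℝ ξ y : ℝ)| + ‖ξ‖ * r := by linarith
      linarith
    by_cases hcase : |(inner ℝ ξ x : ℝ)| ≤ 2 * r * ‖ξ‖
    · -- slab estimate
      have hu : ‖(‖ξ‖⁻¹ : ℝ) • ξ‖ = 1 := by
        rw [norm_smul, norm_inv, norm_norm, inv_mul_cancel₀ hξ0.ne']
      have hsub : bad ξ ⊆ {y : EuclideanSpace ℝ (Fin d) |
          y ∈ closedBall x r ∧ |(inner ℝ ((‖ξ‖⁻¹ : ℝ) • ξ) y : ℝ)| ≤ ε * M ξ / ‖ξ‖} := by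
        rintro y ⟨h1, h2⟩
        refine ⟨h1, ?_⟩
        rw [real_inner_smul_left, abs_mul, abs_inv, abs_norm, div_eq_inv_mul]
        exact mul_le_mul_of_nonneg_left h2 (by positivity)
      have hMle : M ξ ≤ 3 * r * ‖ξ‖ := by
        simp only [hM]; linarith
      have hle : 2 * (ε * M ξ / ‖ξ‖) ≤ 2 * (3 * ε * r) := by
        have : ε * M ξ / ‖ξ‖ ≤ 3 * ε * r := by
          rw [div_le_iff₀ hξ0]
          nlinarith [hεpos.le]
        linarith
      calc volume (bad ξ) ≤ _ := measure_mono hsub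
        _ ≤ ENNReal.ofReal (2 * (ε * M ξ / ‖ξ‖)) * ENNReal.ofReal (2 * r) ^ (d - 1) :=
            slab_vol hd _ hu x r _
        _ ≤ ENNReal.ofReal (2 * (3 * ε * r)) * ENNReal.ofReal (2 * r) ^ (d - 1) :=
            mul_le_mul_left (ENNReal.ofReal_le_ofReal hle) _
        _ = ENNReal.ofReal (3 * ε * 2 ^ d * r ^ d) := by
            rw [← ENNReal.ofReal_pow (by linarith : (0:ℝ) ≤ 2 * r),
              ← ENNReal.ofReal_mul (by nlinarith [mul_pos hεpos hr] : (0:ℝ) ≤ 2 * (3 * ε * r))]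
            congr 1
            have hd1 : d - 1 + 1 = d := Nat.succ_pred_eq_of_pos hd
            have h2d : (2 : ℝ) ^ d = 2 ^ (d - 1) * 2 := by rw [← pow_succ, hd1]
            have hrd : r ^ d = r ^ (d - 1) * r := by rw [← pow_succ, hd1]
            rw [mul_pow, h2d, hrd]; ring
    · -- bad set is empty
      have hempty : bad ξ = ∅ := by
        rw [Set.eq_empty_iff_forall_notMem]
        rintro y ⟨h1, h2⟩
        push_neg at hcase
        have h3 := hinner_bound y h1
        have h4 : 0 < r * ‖ξ‖ := by positivity
        have h5 : ε * M ξ ≤ (1 / 4) * M ξ :=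
          mul_le_mul_of_nonneg_right hεle (hMnn ξ)
        simp only [hM] at h5 h2
        linarith
      simp [hempty]
  -- total bad volume
  set Bad := ⋃ ξ ∈ Rp, bad ξ with hBad
  have hBadvol : volume Bad ≤ ENNReal.ofReal (r ^ d * Vr / 2) := by
    calc volume Bad ≤ ∑ ξ ∈ Rp, volume (bad ξ) := measure_biUnion_finset_le _ _
      _ ≤ ∑ _ξ ∈ Rp, ENNReal.ofReal (3 * ε * 2 ^ d * r ^ d) := Finset.sum_le_sum hbadvol
      _ = (N : ℝ≥0∞) * ENNReal.ofReal (3 * ε * 2 ^ d * r ^ d) := by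
          rw [Finset.sum_const, nsmul_eq_mul, hN]
      _ = ENNReal.ofReal ((N : ℝ) * (3 * ε * 2 ^ d * r ^ d)) := by
          rw [ENNReal.ofReal_mul (Nat.cast_nonneg N), ENNReal.ofReal_natCast]
      _ ≤ ENNReal.ofReal (r ^ d * Vr / 2) := by
          apply ENNReal.ofReal_le_ofReal
          have h2d : (0 : ℝ) < 2 ^ d := by positivity
          have hNn : (0 : ℝ) ≤ (N : ℝ) := Nat.cast_nonneg N
          have h1 : (N : ℝ) * 3 * 2 ^ d * ε ≤ (N : ℝ) * 3 * 2 ^ d * (Vr / (6 * 2 ^ d * (N + 1))) :=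
            mul_le_mul_of_nonneg_left hεle'
              (mul_nonneg (mul_nonneg hNn (by norm_num)) h2d.le)
          have h2 : (N : ℝ) * 3 * 2 ^ d * (Vr / (6 * 2 ^ d * (N + 1))) ≤ Vr / 2 := by
            rw [← mul_div_assoc, div_le_div_iff₀ hden (by norm_num)]
            have hexp : Vr * (6 * 2 ^ d * ((N : ℝ) + 1))
                = (N : ℝ) * 3 * 2 ^ d * Vr * 2 + 6 * (2 ^ d * Vr) := by ring
            rw [hexp]
            have hpos : (0 : ℝ) ≤ 6 * (2 ^ d * Vr) :=
              mul_nonneg (by norm_num) (mul_nonneg h2d.le hVrpos.le)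
            exact le_add_of_nonneg_right hpos
          have h3 : (N : ℝ) * (3 * ε * 2 ^ d) ≤ Vr / 2 := by linarith [h1, h2]
          have h4 : (0 : ℝ) ≤ r ^ d := (pow_pos hr d).le
          calc (N : ℝ) * (3 * ε * 2 ^ d * r ^ d) = ((N : ℝ) * (3 * ε * 2 ^ d)) * r ^ d := by ring
            _ ≤ (Vr / 2) * r ^ d := mul_le_mul_of_nonneg_right h3 h4
            _ = r ^ d * Vr / 2 := by ring
  -- the good set
  set G := closedBall x r \ Bad with hG
  have hbadmeas : ∀ ξ : EuclideanSpace ℝ (Fin d), MeasurableSet (bad ξ) := by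
    intro ξ
    have hcont : Continuous fun y : EuclideanSpace ℝ (Fin d) => |(inner ℝ ξ y : ℝ)| :=
      (continuous_const.inner continuous_id).abs
    have hrfl : bad ξ = closedBall x r ∩ {y | |(inner ℝ ξ y : ℝ)| ≤ ε * M ξ} := rfl
    rw [hrfl]
    exact (Metric.isClosed_closedBall.inter (isClosed_le hcont continuous_const)).measurableSet
  have hGmeas : MeasurableSet G :=
    measurableSet_closedBall.diff
      (MeasurableSet.biUnion Rp.countable_toSet fun ξ _ => hbadmeas ξ)
  have hhalf : (0 : ℝ) ≤ r ^ d * Vr / 2 :=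
    div_nonneg (mul_nonneg (pow_nonneg hr.le d) hVrpos.le) (by norm_num)
  have hBall : volume (closedBall x r) = ENNReal.ofReal (r ^ d * Vr) := by
    rw [Measure.addHaar_closedBall _ _ hr.le, finrank_euclideanSpace_fin,
      ENNReal.ofReal_mul (pow_nonneg hr.le d), hVr, ENNReal.ofReal_toReal hVtop]
  have hGvol : ENNReal.ofReal (r ^ d * Vr / 2) ≤ volume G := by
    have hcover : closedBall x r ⊆ G ∪ Bad := by
      intro y hy
      by_cases h : y ∈ Bad
      · exact Or.inr h
      · exact Or.inl ⟨hy, h⟩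
    have h1 : volume (closedBall x r) ≤ volume G + volume Bad :=
      (measure_mono hcover).trans (measure_union_le _ _)
    have h2 : ENNReal.ofReal (r ^ d * Vr / 2) + ENNReal.ofReal (r ^ d * Vr / 2)
        ≤ volume G + ENNReal.ofReal (r ^ d * Vr / 2) := by
      rw [← ENNReal.ofReal_add hhalf hhalf]
      have heq : r ^ d * Vr / 2 + r ^ d * Vr / 2 = r ^ d * Vr := by ring
      rw [heq, ← hBall]
      exact h1.trans (add_le_add_right hBadvol _)
    exact (ENNReal.add_le_add_iff_right ENNReal.ofReal_ne_top).mp h2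
  -- lower bound on the weight on the good set
  have hgood : ∀ y ∈ G, (∏ ξ ∈ Rp, (ε * (|(inner ℝ ξ x : ℝ)| + r * ‖ξ‖)) ^ (2 * k ξ))
      ≤ dunklWeight Rp k y := by
    intro y hy
    unfold dunklWeight
    apply Finset.prod_le_prod
    · intro ξ _
      exact Real.rpow_nonneg (mul_nonneg hεpos.le (hMnn ξ)) _
    · intro ξ hξ
      have hnb : y ∉ bad ξ := fun h => hy.2 (Set.mem_biUnion hξ h)
      have hgt : ¬ (|(inner ℝ ξ y : ℝ)| ≤ ε * M ξ) := fun h => hnb ⟨hy.1, h⟩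
      push_neg at hgt
      simp only [hM] at hgt
      exact Real.rpow_le_rpow (mul_nonneg hεpos.le (hMnn ξ)) hgt.le
        (by linarith [hk ξ hξ])
  have hPnn : 0 ≤ ∏ ξ ∈ Rp, (ε * (|(inner ℝ ξ x : ℝ)| + r * ‖ξ‖)) ^ (2 * k ξ) :=
    Finset.prod_nonneg fun ξ _ => Real.rpow_nonneg (mul_nonneg hεpos.le (hMnn ξ)) _
  calc ENNReal.ofReal ((∏ ξ ∈ Rp, (ε * (|(inner ℝ ξ x : ℝ)| + r * ‖ξ‖)) ^ (2 * k ξ)) *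
        (r ^ d * Vr / 2))
      = ENNReal.ofReal (∏ ξ ∈ Rp, (ε * (|(inner ℝ ξ x : ℝ)| + r * ‖ξ‖)) ^ (2 * k ξ)) *
          ENNReal.ofReal (r ^ d * Vr / 2) := ENNReal.ofReal_mul hPnn
    _ ≤ ENNReal.ofReal (∏ ξ ∈ Rp, (ε * (|(inner ℝ ξ x : ℝ)| + r * ‖ξ‖)) ^ (2 * k ξ)) *
          volume G := mul_le_mul_right hGvol _
    _ = ∫⁻ _ in G,
          ENNReal.ofReal (∏ ξ ∈ Rp, (ε * (|(inner ℝ ξ x : ℝ)| + r * ‖ξ‖)) ^ (2 * k ξ)) ∂volume :=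
        (setLIntegral_const _ _).symm
    _ ≤ ∫⁻ y in G, ENNReal.ofReal (dunklWeight Rp k y) ∂volume :=
        setLIntegral_mono' hGmeas fun y hy => ENNReal.ofReal_le_ofReal (hgood y hy)
    _ ≤ ∫⁻ y in closedBall x r, ENNReal.ofReal (dunklWeight Rp k y) ∂volume :=
        lintegral_mono_set diff_subset
    _ = dunklMeasure Rp k (closedBall x r) :=
        (withDensity_apply _ measurableSet_closedBall).symm

/-- Doubling property. -/
theorem dunklMeasure_doubling {d : ℕ} (hd : 0 < d)
    (Rp : Finset (EuclideanSpace ℝ (Fin d))) (hRp : ∀ ξ ∈ Rp, ξ ≠ 0)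
    (k : EuclideanSpace ℝ (Fin d) → ℝ) (hk : ∀ ξ ∈ Rp, 0 ≤ k ξ) :
    ∃ c : ℝ, 0 < c ∧ ∀ (x : EuclideanSpace ℝ (Fin d)) (r : ℝ), 0 < r →
      (dunklMeasure Rp k) (closedBall x (2 * r))
        ≤ ENNReal.ofReal c * (dunklMeasure Rp k) (closedBall x r) := by
  classical
  obtain ⟨ε, hεpos, hlow⟩ := dunkl_lower hd Rp hRp k hk
  set C := ∏ ξ ∈ Rp, (2 / ε) ^ (2 * k ξ) with hC
  have hCpos : 0 < C :=
    Finset.prod_pos fun ξ _ => Real.rpow_pos_of_pos (div_pos two_pos hεpos) _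
  refine ⟨2 ^ (d + 1) * C, mul_pos (by positivity) hCpos, ?_⟩
  intro x r hr
  have hL := hlow x r hr
  set Vr := (volume (ball (0 : EuclideanSpace ℝ (Fin d)) 1)).toReal with hVr
  have hVtop : volume (ball (0 : EuclideanSpace ℝ (Fin d)) 1) ≠ ⊤ := measure_ball_lt_top.ne
  have hV0 : 0 < volume (ball (0 : EuclideanSpace ℝ (Fin d)) 1) := measure_ball_pos _ _ one_pos
  have hVrpos : 0 < Vr := ENNReal.toReal_pos hV0.ne' hVtop
  set P := ∏ ξ ∈ Rp, (ε * (|(inner ℝ ξ x : ℝ)| + r * ‖ξ‖)) ^ (2 * k ξ) with hP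
  set Q := ∏ ξ ∈ Rp, (|(inner ℝ ξ x : ℝ)| + (2 * r) * ‖ξ‖) ^ (2 * k ξ) with hQ
  have hMnn : ∀ ξ : EuclideanSpace ℝ (Fin d), 0 ≤ |(inner ℝ ξ x : ℝ)| + (2 * r) * ‖ξ‖ :=
    fun ξ => add_nonneg (abs_nonneg _) (mul_nonneg (by linarith) (norm_nonneg _))
  have hQnn : 0 ≤ Q := Finset.prod_nonneg fun ξ _ => Real.rpow_nonneg (hMnn ξ) _
  have hPnn : 0 ≤ P := Finset.prod_nonneg fun ξ _ => Real.rpow_nonneg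
    (mul_nonneg hεpos.le (add_nonneg (abs_nonneg _) (mul_nonneg hr.le (norm_nonneg _)))) _
  -- upper estimate for the big ball
  have hup : dunklMeasure Rp k (closedBall x (2 * r)) ≤ ENNReal.ofReal (Q * ((2 * r) ^ d * Vr)) := by
    have hpt : ∀ y ∈ closedBall x (2 * r),
        ENNReal.ofReal (dunklWeight Rp k y) ≤ ENNReal.ofReal Q := by
      intro y hy
      apply ENNReal.ofReal_le_ofReal
      rw [hQ]
      unfold dunklWeight
      apply Finset.prod_le_prod (fun ξ _ => Real.rpow_nonneg (abs_nonneg _) _)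
      intro ξ hξ
      refine Real.rpow_le_rpow (abs_nonneg _) ?_ (by linarith [hk ξ hξ])
      have h1 : (inner ℝ ξ y : ℝ) = (inner ℝ ξ x : ℝ) + (inner ℝ ξ (y - x) : ℝ) := by
        rw [inner_sub_right]; ring
      have h2 : |(inner ℝ ξ (y - x) : ℝ)| ≤ ‖ξ‖ * (2 * r) := by
        refine (abs_real_inner_le_norm _ _).trans ?_
        have hxy : ‖y - x‖ ≤ 2 * r := by rwa [mem_closedBall, dist_eq_norm] at hy
        exact mul_le_mul_of_nonneg_left hxy (norm_nonneg _)
      calc |(inner ℝ ξ y : ℝ)| = |(inner ℝ ξ x : ℝ) + (inner ℝ ξ (y - x) : ℝ)| := by rw [← h1]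
        _ ≤ |(inner ℝ ξ x : ℝ)| + |(inner ℝ ξ (y - x) : ℝ)| := abs_add_le _ _
        _ ≤ |(inner ℝ ξ x : ℝ)| + (2 * r) * ‖ξ‖ := by rw [mul_comm (2 * r) ‖ξ‖]; linarith
    have hball2 : volume (closedBall x (2 * r)) = ENNReal.ofReal ((2 * r) ^ d * Vr) := by
      rw [Measure.addHaar_closedBall _ _ (by linarith : (0:ℝ) ≤ 2 * r),
        finrank_euclideanSpace_fin,
        ENNReal.ofReal_mul (pow_nonneg (by linarith : (0:ℝ) ≤ 2 * r) d), hVr,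
        ENNReal.ofReal_toReal hVtop]
    calc dunklMeasure Rp k (closedBall x (2 * r))
        = ∫⁻ y in closedBall x (2 * r), ENNReal.ofReal (dunklWeight Rp k y) ∂volume :=
          withDensity_apply _ measurableSet_closedBall
      _ ≤ ∫⁻ _ in closedBall x (2 * r), ENNReal.ofReal Q ∂volume :=
          setLIntegral_mono' measurableSet_closedBall hpt
      _ = ENNReal.ofReal Q * volume (closedBall x (2 * r)) := setLIntegral_const _ _
      _ = ENNReal.ofReal (Q * ((2 * r) ^ d * Vr)) := by
          rw [hball2, ← ENNReal.ofReal_mul hQnn]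
  -- compare the two bounds
  have hQCP : Q * ((2 * r) ^ d * Vr) ≤ (2 ^ (d + 1) * C) * (P * (r ^ d * Vr / 2)) := by
    have hQle : Q ≤ C * P := by
      rw [hQ, hC, hP, ← Finset.prod_mul_distrib]
      apply Finset.prod_le_prod (fun ξ _ => Real.rpow_nonneg (hMnn ξ) _)
      intro ξ hξ
      rw [← Real.mul_rpow (div_nonneg (by norm_num) hεpos.le)
        (mul_nonneg hεpos.le (add_nonneg (abs_nonneg _) (mul_nonneg hr.le (norm_nonneg _))))]
      refine Real.rpow_le_rpow (hMnn ξ) ?_ (by linarith [hk ξ hξ])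
      have heq : (2 / ε) * (ε * (|(inner ℝ ξ x : ℝ)| + r * ‖ξ‖))
          = 2 * (|(inner ℝ ξ x : ℝ)| + r * ‖ξ‖) := by
        field_simp
      rw [heq]
      have hn := norm_nonneg ξ
      have ha := abs_nonneg ((inner ℝ ξ x : ℝ))
      nlinarith
    have hrw : (2 * r) ^ d = 2 ^ d * r ^ d := mul_pow 2 r d
    have h2d1 : (2 : ℝ) ^ (d + 1) = 2 ^ d * 2 := pow_succ 2 d
    calc Q * ((2 * r) ^ d * Vr) = (2 ^ d * r ^ d * Vr) * Q := by rw [hrw]; ring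
      _ ≤ (2 ^ d * r ^ d * Vr) * (C * P) :=
          mul_le_mul_of_nonneg_left hQle
            (mul_nonneg (mul_nonneg (by positivity) (pow_nonneg hr.le d)) hVrpos.le)
      _ = (2 ^ (d + 1) * C) * (P * (r ^ d * Vr / 2)) := by rw [h2d1]; ring
  calc dunklMeasure Rp k (closedBall x (2 * r))
      ≤ ENNReal.ofReal (Q * ((2 * r) ^ d * Vr)) := hup
    _ ≤ ENNReal.ofReal ((2 ^ (d + 1) * C) * (P * (r ^ d * Vr / 2))) :=
        ENNReal.ofReal_le_ofReal hQCP
    _ = ENNReal.ofReal (2 ^ (d + 1) * C) * ENNReal.ofReal (P * (r ^ d * Vr / 2)) :=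
        ENNReal.ofReal_mul (mul_nonneg (by positivity) hCpos.le)
    _ ≤ ENNReal.ofReal (2 ^ (d + 1) * C) * dunklMeasure Rp k (closedBall x r) :=
        mul_le_mul_right hL _
end
end
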